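/- arXiv:0805.3072 — 3 statements merged into one kernel-verified Lean document; each statement's English description precedes it below -/
import Mathlib

section
/- Every 5-dimensional naturally graded quasi-filiform complex Zinbiel algebra of type A_(3) is isomorphic to the algebra with basis e_1, …, e_5 and products e_1∘e_2 = e_3, e_2∘e_1 = −e_3, e_1∘e_3 = e_4, e_2∘e_3 = e_5, all other products of basis vectors being zero. -/
/-- A complex Zinbiel algebra structure on the module `A`: a bilinear
multiplication satisfying `(x∘y)∘z = x∘(y∘z) + x∘(z∘y)`. -/
structure ZinbielStr (A : Type*) [AddCommGroup A] [Module ℂ A] where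
  mul : A →ₗ[ℂ] A →ₗ[ℂ] A
  zinbiel : ∀ x y z : A, mul (mul x y) z = mul x (mul y z) + mul x (mul z y)

namespace ZinbielStr

variable {A : Type*} [AddCommGroup A] [Module ℂ A]

/-- `M.lcs k` is the term `A^k` of the lower central series for `k ≥ 1`
(`A^1 = A`, `A^{k+1} = span (A ∘ A^k)`), with the convention `M.lcs 0 = ⊤`. -/
def lcs (M : ZinbielStr A) : ℕ → Submodule ℂ A
  | 0 => ⊤
  | 1 => ⊤
  | k + 2 => Submodule.span ℂ {z | ∃ a b, b ∈ lcs M (k + 1) ∧ z = M.mul a b}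

/-- A Zinbiel algebra is nilpotent when some term of the lower central series vanishes. -/
def IsNilpotent (M : ZinbielStr A) : Prop := ∃ s, 1 ≤ s ∧ M.lcs s = ⊥

/-- `Ag` is a natural grading of `M` with parts `Ag 1, …, Ag t`:
the parts are independent, `A_i ∘ A_j ⊆ A_{i+j}` (with `A_k = 0` for `k > t` and `k = 0`),
and `A^k = A_k ⊕ A_{k+1} ⊕ ⋯ ⊕ A_t` for all `1 ≤ k ≤ t`. -/
structure IsNaturalGrading (M : ZinbielStr A) (t : ℕ) (Ag : ℕ → Submodule ℂ A) : Prop where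
  zero_deg : Ag 0 = ⊥
  high_deg : ∀ k, t < k → Ag k = ⊥
  indep : iSupIndep Ag
  mul_mem : ∀ i j x y, x ∈ Ag i → y ∈ Ag j → M.mul x y ∈ Ag (i + j)
  lcs_eq : ∀ k, 1 ≤ k → k ≤ t → M.lcs k = ⨆ j, ⨆ (_ : k ≤ j), Ag j

/-- An `n`-dimensional Zinbiel algebra is quasi-filiform if `A^{n-2} ≠ 0` and `A^{n-1} = 0`. -/
def IsQuasiFiliform (M : ZinbielStr A) (n : ℕ) : Prop :=
  Module.finrank ℂ A = n ∧ M.lcs (n - 2) ≠ ⊥ ∧ M.lcs (n - 1) = ⊥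

/-- Every 5-dimensional naturally graded quasi-filiform complex Zinbiel
algebra of type `A_(3)` is isomorphic to a single explicit algebra. -/
theorem dim5_type_three_classification {A : Type*} [AddCommGroup A] [Module ℂ A]
    [FiniteDimensional ℂ A] (M : ZinbielStr A)
    (Ag : ℕ → Submodule ℂ A)
    (hqf : M.IsQuasiFiliform 5) (hg : M.IsNaturalGrading 3 Ag)
    (h1 : Module.finrank ℂ (Ag 1) = 2) (h2 : Module.finrank ℂ (Ag 3) = 2) :
    ∃ e : Module.Basis (Fin 5) ℂ A, ∀ i j : Fin 5,
      M.mul (e i) (e j) =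
        ![![0, e 2, e 3, 0, 0],
           ![-e 2, 0, e 4, 0, 0],
           ![0, 0, 0, 0, 0],
           ![0, 0, 0, 0, 0],
           ![0, 0, 0, 0, 0]] i j := by
  obtain ⟨hfr, -, -⟩ := hqf
  -- graded pieces of degree ≥ 4 vanish
  have hhigh : ∀ k, 4 ≤ k → Ag k = ⊥ := fun k hk => hg.high_deg k (by omega)
  have hzero : ∀ i j (x y : A), x ∈ Ag i → y ∈ Ag j → 4 ≤ i + j → M.mul x y = 0 := by
    intro i j x y hx hy hij
    have h := hg.mul_mem i j x y hx hy
    rw [hhigh _ hij] at h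
    simpa using h
  -- collapsing the iSup in lcs_eq
  have haux : ∀ k j : ℕ, k ≤ j → Ag j ≤ ⨆ j, ⨆ (_ : k ≤ j), Ag j := by
    intro k j hkj
    exact le_iSup₂ (f := fun j (_ : k ≤ j) => Ag j) j hkj
  have hTop : Ag 1 ⊔ (Ag 2 ⊔ Ag 3) = ⊤ := by
    apply le_antisymm le_top
    have h1top : (⊤ : Submodule ℂ A) = ⨆ j, ⨆ (_ : 1 ≤ j), Ag j :=
      hg.lcs_eq 1 le_rfl (by norm_num)
    rw [h1top]
    apply iSup_le; intro j; apply iSup_le; intro hj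
    match j, hj with
    | 1, _ => exact le_sup_left
    | 2, _ => exact le_sup_of_le_right le_sup_left
    | 3, _ => exact le_sup_of_le_right le_sup_right
    | (m+4), _ => rw [hhigh (m+4) (by omega)]; exact bot_le
  have hlcs2 : M.lcs 2 = Ag 2 ⊔ Ag 3 := by
    rw [hg.lcs_eq 2 (by norm_num) (by norm_num)]
    apply le_antisymm
    · apply iSup_le; intro j; apply iSup_le; intro hj
      match j, hj with
      | 2, _ => exact le_sup_left
      | 3, _ => exact le_sup_right
      | (m+4), _ => rw [hhigh (m+4) (by omega)]; exact bot_le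
    · exact sup_le (haux 2 2 le_rfl) (haux 2 3 (by norm_num))
  have hlcs3 : M.lcs 3 = Ag 3 := by
    rw [hg.lcs_eq 3 (by norm_num) le_rfl]
    apply le_antisymm
    · apply iSup_le; intro j; apply iSup_le; intro hj
      match j, hj with
      | 3, _ => exact le_rfl
      | (m+4), _ => rw [hhigh (m+4) (by omega)]; exact bot_le
    · exact haux 3 3 le_rfl
  -- decomposition of elements
  have hdec : ∀ a : A, ∃ a1 a2 a3, a1 ∈ Ag 1 ∧ a2 ∈ Ag 2 ∧ a3 ∈ Ag 3 ∧ a = a1 + a2 + a3 := by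
    intro a
    have ha : a ∈ Ag 1 ⊔ (Ag 2 ⊔ Ag 3) := by rw [hTop]; trivial
    obtain ⟨a1, h1', w, hw, rfl⟩ := Submodule.mem_sup.mp ha
    obtain ⟨a2, h2', a3, h3', rfl⟩ := Submodule.mem_sup.mp hw
    exact ⟨a1, a2, a3, h1', h2', h3', (add_assoc _ _ _).symm⟩
  -- disjointness
  have hd1 : Disjoint (Ag 1) (Ag 2 ⊔ Ag 3) := by
    refine (hg.indep 1).mono_right (sup_le ?_ ?_)
    · exact le_iSup₂ (f := fun j (_ : j ≠ 1) => Ag j) 2 (by norm_num)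
    · exact le_iSup₂ (f := fun j (_ : j ≠ 1) => Ag j) 3 (by norm_num)
  have hd23 : Disjoint (Ag 2) (Ag 3) := hg.indep.pairwiseDisjoint (by norm_num)
  -- dimension count : finrank (Ag 2) = 1
  have hfin23 : Module.finrank ℂ ↥(Ag 2 ⊔ Ag 3)
      = Module.finrank ℂ (Ag 2) + Module.finrank ℂ (Ag 3) := by
    have h := Submodule.finrank_sup_add_finrank_inf_eq (Ag 2) (Ag 3)
    rw [disjoint_iff.mp hd23] at h
    simpa using h
  have hd2fr : Module.finrank ℂ (Ag 2) = 1 := by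
    have h := Submodule.finrank_sup_add_finrank_inf_eq (Ag 1) (Ag 2 ⊔ Ag 3)
    rw [disjoint_iff.mp hd1, hTop] at h
    simp only [finrank_top, hfr, finrank_bot, add_zero, hfin23, h1, h2] at h
    omega
  -- the span of products of Ag 1 with Ag 1
  set W : Submodule ℂ A := Submodule.span ℂ {w | ∃ a ∈ Ag 1, ∃ b ∈ Ag 1, w = M.mul a b} with hW
  have hWle : W ≤ Ag 2 := by
    apply Submodule.span_le.mpr
    rintro w ⟨a, ha, b, hb, rfl⟩
    exact hg.mul_mem 1 1 a b ha hb
  have hlcs2le : M.lcs 2 ≤ W ⊔ Ag 3 := by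
    show Submodule.span ℂ {z | ∃ a b, b ∈ M.lcs 1 ∧ z = M.mul a b} ≤ W ⊔ Ag 3
    apply Submodule.span_le.mpr
    rintro w ⟨a, b, -, rfl⟩
    obtain ⟨a1, a2, a3, ha1, ha2, ha3, rfl⟩ := hdec a
    obtain ⟨b1, b2, b3, hb1, hb2, hb3, rfl⟩ := hdec b
    have hexp : M.mul (a1+a2+a3) (b1+b2+b3)
        = M.mul a1 b1 + M.mul a1 b2 + M.mul a2 b1 := by
      simp only [map_add, LinearMap.add_apply]
      rw [hzero 1 3 _ _ ha1 hb3 (by norm_num), hzero 2 2 _ _ ha2 hb2 (by norm_num),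
        hzero 2 3 _ _ ha2 hb3 (by norm_num), hzero 3 1 _ _ ha3 hb1 (by norm_num),
        hzero 3 2 _ _ ha3 hb2 (by norm_num), hzero 3 3 _ _ ha3 hb3 (by norm_num)]
      abel
    rw [SetLike.mem_coe, hexp]
    refine add_mem (add_mem ?_ ?_) ?_
    · exact Submodule.mem_sup_left (Submodule.subset_span ⟨a1, ha1, b1, hb1, rfl⟩)
    · exact Submodule.mem_sup_right (hg.mul_mem 1 2 a1 b2 ha1 hb2)
    · exact Submodule.mem_sup_right (hg.mul_mem 2 1 a2 b1 ha2 hb1)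
  have hAg2W : Ag 2 ≤ W := by
    intro v hv
    have hv2 : v ∈ W ⊔ Ag 3 := hlcs2le (by rw [hlcs2]; exact Submodule.mem_sup_left hv)
    obtain ⟨w, hw, u, hu, rfl⟩ := Submodule.mem_sup.mp hv2
    have hu2 : u ∈ Ag 2 := by
      have : u = (w + u) - w := by abel
      rw [this]
      exact sub_mem hv (hWle hw)
    have hu0 : u = 0 := by
      have := disjoint_iff.mp hd23
      have hm : u ∈ Ag 2 ⊓ Ag 3 := ⟨hu2, hu⟩
      rw [this] at hm
      simpa using hm
    rw [hu0, add_zero]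
    exact hw
  -- existence of a nonzero product inside Ag 1
  have hexists : ∃ a0 ∈ Ag 1, ∃ b0 ∈ Ag 1, M.mul a0 b0 ≠ 0 := by
    by_contra h
    push_neg at h
    have hWbot : W = ⊥ := by
      apply le_bot_iff.mp
      apply Submodule.span_le.mpr
      rintro w ⟨a, ha, b, hb, rfl⟩
      simp [h a ha b hb]
    have : Ag 2 = ⊥ := le_bot_iff.mp (hWbot ▸ hAg2W)
    rw [this, finrank_bot] at hd2fr
    exact absurd hd2fr (by norm_num)
  -- get the generator z of Ag 2
  obtain ⟨⟨z, hz2⟩, hzne', hzgen⟩ := finrank_eq_one_iff'.mp hd2fr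
  have hzne : z ≠ 0 := fun h => hzne' (by ext; simpa using h)
  have hz_span : Ag 2 = Submodule.span ℂ {z} := by
    apply le_antisymm
    · intro v hv
      obtain ⟨c, hc⟩ := hzgen ⟨v, hv⟩
      have : c • z = v := congrArg Subtype.val hc
      rw [← this]
      exact Submodule.smul_mem _ _ (Submodule.mem_span_singleton_self _)
    · rw [Submodule.span_le, Set.singleton_subset_iff]
      exact hz2
  have hspan : ∀ a b : A, a ∈ Ag 1 → b ∈ Ag 1 → ∃ c : ℂ, M.mul a b = c • z := by
    intro a b ha hb
    have h := hg.mul_mem 1 1 a b ha hb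
    rw [hz_span] at h
    obtain ⟨c, hc⟩ := Submodule.mem_span_singleton.mp h
    exact ⟨c, hc.symm⟩
  -- Ag 3 is spanned by products a ∘ z with a ∈ Ag 1
  set V : Submodule ℂ A := Submodule.span ℂ {w | ∃ a ∈ Ag 1, w = M.mul a z} with hV
  have hVle : V ≤ Ag 3 := by
    apply Submodule.span_le.mpr
    rintro w ⟨a, ha, rfl⟩
    exact hg.mul_mem 1 2 a z ha hz2
  have hAg3V : Ag 3 = V := by
    refine le_antisymm ?_ hVle
    rw [← hlcs3]
    show Submodule.span ℂ {w | ∃ a b, b ∈ M.lcs 2 ∧ w = M.mul a b} ≤ V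
    apply Submodule.span_le.mpr
    rintro w ⟨a, b, hb, rfl⟩
    rw [hlcs2] at hb
    obtain ⟨b2, hb2, b3, hb3, rfl⟩ := Submodule.mem_sup.mp hb
    obtain ⟨a1, a2, a3, ha1, ha2, ha3, rfl⟩ := hdec a
    rw [hz_span] at hb2
    obtain ⟨c, hc⟩ := Submodule.mem_span_singleton.mp hb2
    have hexp : M.mul (a1+a2+a3) (b2 + b3) = c • M.mul a1 z := by
      rw [← hc]
      simp only [map_add, map_smul, LinearMap.add_apply, LinearMap.smul_apply]
      rw [hzero 2 2 _ _ ha2 hz2 (by norm_num), hzero 3 2 _ _ ha3 hz2 (by norm_num),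
        hzero 1 3 _ _ ha1 hb3 (by norm_num), hzero 2 3 _ _ ha2 hb3 (by norm_num),
        hzero 3 3 _ _ ha3 hb3 (by norm_num)]
      simp
    rw [SetLike.mem_coe, hexp]
    exact Submodule.smul_mem _ _ (Submodule.subset_span ⟨a1, ha1, rfl⟩)
  -- Zinbiel relation specialized
  have hrel : ∀ a b c : A, M.mul (M.mul a b) c = M.mul a (M.mul b c + M.mul c b) := by
    intro a b c
    rw [map_add]
    exact M.zinbiel a b c
  -- antisymmetry on Ag 1
  have hanti : ∀ b c : A, b ∈ Ag 1 → c ∈ Ag 1 → M.mul b c + M.mul c b = 0 := by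
    by_contra h
    push_neg at h
    obtain ⟨b1, c1, hb1, hc1, hne0⟩ := h
    obtain ⟨s1, hs1⟩ := hspan b1 c1 hb1 hc1
    obtain ⟨s2, hs2⟩ := hspan c1 b1 hc1 hb1
    have hsum : M.mul b1 c1 + M.mul c1 b1 = (s1 + s2) • z := by rw [hs1, hs2, add_smul]
    have hsne : s1 + s2 ≠ 0 := by
      intro h0
      rw [h0, zero_smul] at hsum
      exact hne0 hsum
    have hsub : Ag 3 ≤ Submodule.span ℂ {M.mul z c1} := by
      rw [hAg3V]
      apply Submodule.span_le.mpr
      rintro w ⟨a, ha, rfl⟩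
      obtain ⟨β, hβ⟩ := hspan a b1 ha hb1
      have hkey := hrel a b1 c1
      rw [hsum, hβ, map_smul] at hkey
      have hkey2 : M.mul a z = ((s1+s2)⁻¹ * β) • M.mul z c1 := by
        have h3 := congrArg (fun w => (s1+s2)⁻¹ • w) hkey
        simp only [map_smul, LinearMap.smul_apply, smul_smul, inv_mul_cancel₀ hsne,
          one_smul] at h3
        exact h3.symm
      rw [SetLike.mem_coe, hkey2]
      exact Submodule.smul_mem _ _ (Submodule.mem_span_singleton_self _)
    have hle1 : Module.finrank ℂ (Submodule.span ℂ {M.mul z c1}) ≤ 1 := by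
      by_cases hc : M.mul z c1 = 0
      · rw [hc, Submodule.span_zero_singleton]
        simp
      · rw [finrank_span_singleton hc]
    have := Submodule.finrank_mono hsub
    omega
  -- z ∘ Ag 1 = 0
  obtain ⟨a0, ha0, b0, hb0, hab⟩ := hexists
  obtain ⟨lam, hlam⟩ := hspan a0 b0 ha0 hb0
  have hlamne : lam ≠ 0 := fun h => hab (by rw [hlam, h, zero_smul])
  have hzc : ∀ c : A, c ∈ Ag 1 → M.mul z c = 0 := by
    intro c hc
    have h := hrel a0 b0 c
    rw [hanti b0 c hb0 hc, map_zero, hlam] at h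
    have h' : lam • M.mul z c = 0 := by
      simpa only [map_smul, LinearMap.smul_apply] using h
    exact (smul_eq_zero.mp h').resolve_left hlamne
  -- the basis vectors
  set e1 : A := lam⁻¹ • a0 with he1
  have he1m : e1 ∈ Ag 1 := Submodule.smul_mem _ _ ha0
  have hb0ne : b0 ≠ 0 := fun h => hab (by rw [h, map_zero])
  have h12 : M.mul e1 b0 = z := by
    rw [he1, map_smul, LinearMap.smul_apply, hlam, smul_smul, inv_mul_cancel₀ hlamne, one_smul]
  have h21 : M.mul b0 e1 = -z := by
    have h := hanti e1 b0 he1m hb0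
    rw [h12] at h
    linear_combination (norm := abel) h
  have hself : ∀ x : A, x + x = 0 → x = 0 := by
    intro x hx
    have h2x : (2:ℂ) • x = 0 := by rw [two_smul]; exact hx
    rcases smul_eq_zero.mp h2x with h | h
    · exact absurd h two_ne_zero
    · exact h
  have h11 : M.mul e1 e1 = 0 := hself _ (hanti e1 e1 he1m he1m)
  have h22 : M.mul b0 b0 = 0 := hself _ (hanti b0 b0 hb0 hb0)
  set e4 : A := M.mul e1 z with he4
  set e5 : A := M.mul b0 z with he5
  have he4m : e4 ∈ Ag 3 := hg.mul_mem 1 2 e1 z he1m hz2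
  have he5m : e5 ∈ Ag 3 := hg.mul_mem 1 2 b0 z hb0 hz2
  -- e1, b0 are independent and span Ag 1
  have hind : LinearIndependent ℂ ![e1, b0] := by
    apply LinearIndependent.pair_iff.mpr
    intro s t hst
    have h' : M.mul (s • e1 + t • b0) b0 = s • z := by
      simp only [map_add, map_smul, LinearMap.add_apply, LinearMap.smul_apply, h12, h22,
        smul_zero, add_zero]
    rw [hst, map_zero, LinearMap.zero_apply] at h'
    have hs : s = 0 := by
      rcases smul_eq_zero.mp h'.symm with h | h
      · exact h
      · exact absurd h hzne
    constructor
    · exact hs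
    · rw [hs, zero_smul, zero_add] at hst
      rcases smul_eq_zero.mp hst with h | h
      · exact h
      · exact absurd h hb0ne
  have hspan12 : Ag 1 = Submodule.span ℂ {e1, b0} := by
    have hle : Submodule.span ℂ {e1, b0} ≤ Ag 1 := by
      rw [Submodule.span_le]
      rintro w hw
      rcases hw with h | h
      · rw [h]; exact he1m
      · rw [Set.mem_singleton_iff.mp h]; exact hb0
    have hrange : ({e1, b0} : Set A) = Set.range ![e1, b0] := by
      simp only [Matrix.range_cons, Matrix.range_empty, Set.union_empty, Set.union_singleton]
      exact Set.pair_comm e1 b0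
    refine (Submodule.eq_of_le_of_finrank_le hle ?_).symm
    rw [h1, hrange, finrank_span_eq_card hind, Fintype.card_fin]
  -- Ag 3 is spanned by e4, e5
  have hAg3le : Ag 3 ≤ Submodule.span ℂ {e4, e5} := by
    rw [hAg3V]
    apply Submodule.span_le.mpr
    rintro w ⟨a, ha, rfl⟩
    rw [hspan12] at ha
    obtain ⟨s, t, hst⟩ := Submodule.mem_span_pair.mp ha
    have hexp : M.mul (s • e1 + t • b0) z = s • e4 + t • e5 := by
      simp only [map_add, map_smul, LinearMap.add_apply, LinearMap.smul_apply, he4, he5]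
    rw [SetLike.mem_coe, ← hst, hexp]
    refine add_mem (Submodule.smul_mem _ _ ?_) (Submodule.smul_mem _ _ ?_)
    · exact Submodule.subset_span (Set.mem_insert _ _)
    · exact Submodule.subset_span (Set.mem_insert_of_mem _ rfl)
  -- the spanning family of all of A
  set v : Fin 5 → A := ![e1, b0, z, e4, e5] with hv
  have htople : ⊤ ≤ Submodule.span ℂ (Set.range v) := by
    rw [← hTop]
    have hmem : ∀ i : Fin 5, v i ∈ Submodule.span ℂ (Set.range v) :=
      fun i => Submodule.subset_span ⟨i, rfl⟩
    refine sup_le ?_ (sup_le ?_ ?_)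
    · rw [hspan12, Submodule.span_le]
      rintro w hw
      rcases hw with h | h
      · rw [h]; exact hmem 0
      · rw [Set.mem_singleton_iff.mp h]; exact hmem 1
    · rw [hz_span, Submodule.span_le, Set.singleton_subset_iff]
      exact hmem 2
    · refine le_trans hAg3le ?_
      rw [Submodule.span_le]
      rintro w hw
      rcases hw with h | h
      · rw [h]; exact hmem 3
      · rw [Set.mem_singleton_iff.mp h]; exact hmem 4
  have hcard : Fintype.card (Fin 5) = Module.finrank ℂ A := by simp [hfr]
  refine ⟨basisOfTopLeSpanOfCardEqFinrank v htople hcard, ?_⟩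
  intro i j
  have hce : ∀ i, basisOfTopLeSpanOfCardEqFinrank v htople hcard i = v i := fun i => by
    rw [coe_basisOfTopLeSpanOfCardEqFinrank]
  simp only [hce]
  -- remaining product facts
  have hz1 : M.mul z e1 = 0 := hzc e1 he1m
  have hz2' : M.mul z b0 = 0 := hzc b0 hb0
  have hzz : M.mul z z = 0 := hzero 2 2 z z hz2 hz2 (by norm_num)
  have h14 : M.mul e1 e4 = 0 := hzero 1 3 e1 e4 he1m he4m (by norm_num)
  have h15 : M.mul e1 e5 = 0 := hzero 1 3 e1 e5 he1m he5m (by norm_num)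
  have h24 : M.mul b0 e4 = 0 := hzero 1 3 b0 e4 hb0 he4m (by norm_num)
  have h25 : M.mul b0 e5 = 0 := hzero 1 3 b0 e5 hb0 he5m (by norm_num)
  have hz4 : M.mul z e4 = 0 := hzero 2 3 z e4 hz2 he4m (by norm_num)
  have hz5 : M.mul z e5 = 0 := hzero 2 3 z e5 hz2 he5m (by norm_num)
  have h4x : ∀ (u : A) (k : ℕ), u ∈ Ag k → 1 ≤ k → M.mul e4 u = 0 :=
    fun u k hu hk => hzero 3 k e4 u he4m hu (by omega)
  have h5x : ∀ (u : A) (k : ℕ), u ∈ Ag k → 1 ≤ k → M.mul e5 u = 0 :=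
    fun u k hu hk => hzero 3 k e5 u he5m hu (by omega)
  fin_cases i <;> fin_cases j <;>
    simp [hv, h11, h12, h21, h22, h14, h15, h24, h25, hz1, hz2', hzz, hz4, hz5,
      h4x e1 1 he1m le_rfl, h4x b0 1 hb0 le_rfl, h4x z 2 hz2 one_le_two,
      h4x e4 3 he4m (by norm_num), h4x e5 3 he5m (by norm_num),
      h5x e1 1 he1m le_rfl, h5x b0 1 hb0 le_rfl, h5x z 2 hz2 one_le_two,
      h5x e4 3 he4m (by norm_num), h5x e5 3 he5m (by norm_num),
      Matrix.vecHead, Matrix.vecTail] <;>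
    rfl

end ZinbielStr
end

section
/- Every 6-dimensional naturally graded quasi-filiform complex Zinbiel algebra of type A_(3) is isomorphic to the algebra with basis e_1, …, e_6 and products e_1∘e_2 = e_3, e_1∘e_3 = e_4, e_1∘e_5 = e_6, e_2∘e_1 = −e_3, e_2∘e_3 = e_5, e_2∘e_4 = −e_6, e_3∘e_3 = e_6, e_4∘e_2 = e_6, e_5∘e_1 = −e_6, all other products of basis vectors being zero. -/
namespace ZinbielStr

variable {A : Type*} [AddCommGroup A] [Module ℂ A]

/-- Every 6-dimensional naturally graded quasi-filiform complex Zinbiel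
algebra of type `A_(3)` is isomorphic to a single explicit algebra. -/
theorem dim6_type_three_classification {A : Type*} [AddCommGroup A] [Module ℂ A]
    [FiniteDimensional ℂ A] (M : ZinbielStr A)
    (Ag : ℕ → Submodule ℂ A)
    (hqf : M.IsQuasiFiliform 6) (hg : M.IsNaturalGrading 4 Ag)
    (h1 : Module.finrank ℂ (Ag 1) = 2) (h2 : Module.finrank ℂ (Ag 3) = 2) :
    ∃ e : Module.Basis (Fin 6) ℂ A, ∀ i j : Fin 6,
      M.mul (e i) (e j) =
        ![![0, e 2, e 3, 0, e 5, 0],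
           ![-e 2, 0, e 4, -e 5, 0, 0],
           ![0, 0, e 5, 0, 0, 0],
           ![0, e 5, 0, 0, 0, 0],
           ![-e 5, 0, 0, 0, 0, 0],
           ![0, 0, 0, 0, 0, 0]] i j := by
  obtain ⟨hdim, hne4, -⟩ := hqf
  have hne4' : M.lcs 4 ≠ ⊥ := by simpa using hne4
  have hAg_le_lcs : ∀ k j : ℕ, 1 ≤ k → k ≤ 4 → k ≤ j → Ag j ≤ M.lcs k := by
    intro k j hk1 hk4 hkj
    rw [hg.lcs_eq k hk1 hk4]
    exact le_iSup₂ (f := fun j (_ : k ≤ j) => Ag j) j hkj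
  have hlcs_le : ∀ k : ℕ, 1 ≤ k → k ≤ 4 → ∀ T : Submodule ℂ A,
      (∀ j, k ≤ j → j ≤ 4 → Ag j ≤ T) → M.lcs k ≤ T := by
    intro k hk1 hk4 T hT
    rw [hg.lcs_eq k hk1 hk4]
    refine iSup_le fun j => iSup_le fun hkj => ?_
    rcases le_or_gt j 4 with h | h
    · exact hT j hkj h
    · rw [hg.high_deg j h]; exact bot_le
  have htople : (⊤ : Submodule ℂ A) ≤ Ag 1 ⊔ Ag 2 ⊔ Ag 3 ⊔ Ag 4 := by
    have h' : M.lcs 1 = ⊤ := rfl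
    rw [← h']
    refine hlcs_le 1 le_rfl (by norm_num) _ ?_
    intro j hj1 hj4
    interval_cases j
    · exact le_sup_of_le_left (le_sup_of_le_left le_sup_left)
    · exact le_sup_of_le_left (le_sup_of_le_left le_sup_right)
    · exact le_sup_of_le_left le_sup_right
    · exact le_sup_right
  have hdec : ∀ a : A, ∃ a1 ∈ Ag 1, ∃ a2 ∈ Ag 2, ∃ a3 ∈ Ag 3, ∃ a4 ∈ Ag 4,
      a = a1 + a2 + a3 + a4 := by
    intro a
    have ha := htople (Submodule.mem_top : a ∈ ⊤)
    rw [Submodule.mem_sup] at ha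
    obtain ⟨y, hy, a4, ha4, hEq⟩ := ha
    rw [Submodule.mem_sup] at hy
    obtain ⟨z, hz, a3, ha3, rfl⟩ := hy
    rw [Submodule.mem_sup] at hz
    obtain ⟨a1, ha1, a2, ha2, rfl⟩ := hz
    exact ⟨a1, ha1, a2, ha2, a3, ha3, a4, ha4, hEq.symm⟩
  have hl2le : M.lcs 2 ≤ Ag 2 ⊔ Ag 3 ⊔ Ag 4 := by
    refine hlcs_le 2 (by norm_num) (by norm_num) _ ?_
    intro j hj1 hj4
    interval_cases j
    · exact le_sup_of_le_left le_sup_left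
    · exact le_sup_of_le_left le_sup_right
    · exact le_sup_right
  have hl3le : M.lcs 3 ≤ Ag 3 ⊔ Ag 4 := by
    refine hlcs_le 3 (by norm_num) (by norm_num) _ ?_
    intro j hj1 hj4
    interval_cases j
    · exact le_sup_left
    · exact le_sup_right
  have hl4le : M.lcs 4 ≤ Ag 4 := by
    refine hlcs_le 4 (by norm_num) (by norm_num) _ ?_
    intro j hj1 hj4
    interval_cases j
    exact le_rfl
  have hAg4ne : Ag 4 ≠ ⊥ := by
    intro hb
    exact hne4' (le_antisymm (hb ▸ hl4le) bot_le)
  have hz0 : ∀ i j (x y : A), x ∈ Ag i → y ∈ Ag j → 4 < i + j → M.mul x y = 0 := by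
    intro i j x y hx hy h
    have hm := hg.mul_mem i j x y hx hy
    rw [hg.high_deg _ h] at hm
    simpa using hm
  have hzx : ∀ (x y : A), x ∈ Ag 0 → M.mul x y = 0 := by
    intro x y hx
    rw [hg.zero_deg] at hx
    simp [show x = 0 from by simpa using hx]
  have hzy : ∀ (x y : A), y ∈ Ag 0 → M.mul x y = 0 := by
    intro x y hy
    rw [hg.zero_deg] at hy
    simp [show y = 0 from by simpa using hy]
  -- span bounds
  have hS2 : ∀ x ∈ Ag 2, x ∈ Submodule.span ℂ {z | ∃ u ∈ Ag 1, ∃ v ∈ Ag 1, z = M.mul u v} := by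
    set S := Submodule.span ℂ {z | ∃ u ∈ Ag 1, ∃ v ∈ Ag 1, z = M.mul u v} with hS
    have hSle : S ≤ Ag 2 := Submodule.span_le.mpr
      (by rintro z ⟨u, hu, v, hv, rfl⟩; exact hg.mul_mem 1 1 u v hu hv)
    have H : ∀ i j (x y : A), x ∈ Ag i → y ∈ Ag j → M.mul x y ∈ S ⊔ (Ag 3 ⊔ Ag 4) := by
      intro i j x y hx hy
      have hc : i = 0 ∨ j = 0 ∨ (i = 1 ∧ j = 1) ∨ i + j = 3 ∨ i + j = 4 ∨ 4 < i + j := by omega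
      rcases hc with rfl | rfl | ⟨rfl, rfl⟩ | hc | hc | hc
      · rw [hzx x y hx]; exact zero_mem _
      · rw [hzy x y hy]; exact zero_mem _
      · exact Submodule.mem_sup_left (Submodule.subset_span ⟨x, hx, y, hy, rfl⟩)
      · exact Submodule.mem_sup_right (Submodule.mem_sup_left (hc ▸ hg.mul_mem i j x y hx hy))
      · exact Submodule.mem_sup_right (Submodule.mem_sup_right (hc ▸ hg.mul_mem i j x y hx hy))
      · rw [hz0 i j x y hx hy hc]; exact zero_mem _
    have hlcs : M.lcs 2 ≤ S ⊔ (Ag 3 ⊔ Ag 4) := by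
      have h2 : M.lcs 2 = Submodule.span ℂ {z | ∃ a b, b ∈ M.lcs 1 ∧ z = M.mul a b} := rfl
      rw [h2]
      refine Submodule.span_le.mpr ?_
      rintro z ⟨a, b, -, rfl⟩
      obtain ⟨a1, ha1, a2, ha2, a3, ha3, a4, ha4, rfl⟩ := hdec a
      obtain ⟨b1, hb1, b2, hb2, b3, hb3, b4, hb4, rfl⟩ := hdec b
      simp only [map_add, LinearMap.add_apply]
      repeat' refine add_mem ?_ ?_
      all_goals exact H _ _ _ _ ‹_› ‹_›
    intro x hx
    have hx2 := hlcs (hAg_le_lcs 2 2 (by norm_num) (by norm_num) le_rfl hx)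
    rw [Submodule.mem_sup] at hx2
    obtain ⟨s, hs, u, hu, hEq⟩ := hx2
    have hu2 : u ∈ Ag 2 := by
      have : u = x - s := by rw [← hEq]; abel
      rw [this]
      exact sub_mem hx (hSle hs)
    have hu0 : u = 0 := by
      refine (Submodule.disjoint_def.mp (hg.indep 2)) u hu2 ?_
      exact (sup_le (le_iSup₂ (f := fun j (_ : j ≠ 2) => Ag j) 3 (by norm_num))
        (le_iSup₂ (f := fun j (_ : j ≠ 2) => Ag j) 4 (by norm_num))) hu
    rw [hu0, add_zero] at hEq
    exact hEq ▸ hs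
  have hS3 : ∀ x ∈ Ag 3, x ∈ Submodule.span ℂ {z | ∃ u ∈ Ag 1, ∃ v ∈ Ag 2, z = M.mul u v} := by
    set S := Submodule.span ℂ {z | ∃ u ∈ Ag 1, ∃ v ∈ Ag 2, z = M.mul u v} with hS
    have hSle : S ≤ Ag 3 := Submodule.span_le.mpr
      (by rintro z ⟨u, hu, v, hv, rfl⟩; exact hg.mul_mem 1 2 u v hu hv)
    have H : ∀ i j (x y : A), x ∈ Ag i → y ∈ Ag j → 2 ≤ j → M.mul x y ∈ S ⊔ Ag 4 := by
      intro i j x y hx hy hj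
      have hc : i = 0 ∨ (i = 1 ∧ j = 2) ∨ i + j = 4 ∨ 4 < i + j := by omega
      rcases hc with rfl | ⟨rfl, rfl⟩ | hc | hc
      · rw [hzx x y hx]; exact zero_mem _
      · exact Submodule.mem_sup_left (Submodule.subset_span ⟨x, hx, y, hy, rfl⟩)
      · exact Submodule.mem_sup_right (hc ▸ hg.mul_mem i j x y hx hy)
      · rw [hz0 i j x y hx hy hc]; exact zero_mem _
    have hlcs : M.lcs 3 ≤ S ⊔ Ag 4 := by
      have h3 : M.lcs 3 = Submodule.span ℂ {z | ∃ a b, b ∈ M.lcs 2 ∧ z = M.mul a b} := rfl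
      rw [h3]
      refine Submodule.span_le.mpr ?_
      rintro z ⟨a, b, hb, rfl⟩
      obtain ⟨a1, ha1, a2, ha2, a3, ha3, a4, ha4, rfl⟩ := hdec a
      have hb' := hl2le hb
      rw [Submodule.mem_sup] at hb'
      obtain ⟨w, hw, b4, hb4, rfl⟩ := hb'
      rw [Submodule.mem_sup] at hw
      obtain ⟨b2, hb2, b3, hb3, rfl⟩ := hw
      simp only [map_add, LinearMap.add_apply]
      repeat' refine add_mem ?_ ?_
      all_goals refine H _ _ _ _ ‹_› ‹_› (by norm_num)
    intro x hx
    have hx3 := hlcs (hAg_le_lcs 3 3 (by norm_num) (by norm_num) le_rfl hx)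
    rw [Submodule.mem_sup] at hx3
    obtain ⟨s, hs, u, hu, hEq⟩ := hx3
    have hu3 : u ∈ Ag 3 := by
      have : u = x - s := by rw [← hEq]; abel
      rw [this]
      exact sub_mem hx (hSle hs)
    have hu0 : u = 0 := by
      refine (Submodule.disjoint_def.mp (hg.indep 3)) u hu3 ?_
      exact le_iSup₂ (f := fun j (_ : j ≠ 3) => Ag j) 4 (by norm_num) hu
    rw [hu0, add_zero] at hEq
    exact hEq ▸ hs
  have hS4 : ∀ x ∈ Ag 4, x ∈ Submodule.span ℂ {z | ∃ u ∈ Ag 1, ∃ v ∈ Ag 3, z = M.mul u v} := by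
    set S := Submodule.span ℂ {z | ∃ u ∈ Ag 1, ∃ v ∈ Ag 3, z = M.mul u v} with hS
    have H : ∀ i j (x y : A), x ∈ Ag i → y ∈ Ag j → 3 ≤ j → M.mul x y ∈ S := by
      intro i j x y hx hy hj
      have hc : i = 0 ∨ (i = 1 ∧ j = 3) ∨ 4 < i + j := by omega
      rcases hc with rfl | ⟨rfl, rfl⟩ | hc
      · rw [hzx x y hx]; exact zero_mem _
      · exact Submodule.subset_span ⟨x, hx, y, hy, rfl⟩
      · rw [hz0 i j x y hx hy hc]; exact zero_mem _
    have hlcs : M.lcs 4 ≤ S := by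
      have h4 : M.lcs 4 = Submodule.span ℂ {z | ∃ a b, b ∈ M.lcs 3 ∧ z = M.mul a b} := rfl
      rw [h4]
      refine Submodule.span_le.mpr ?_
      rintro z ⟨a, b, hb, rfl⟩
      obtain ⟨a1, ha1, a2, ha2, a3, ha3, a4, ha4, rfl⟩ := hdec a
      have hb' := hl3le hb
      rw [Submodule.mem_sup] at hb'
      obtain ⟨b3, hb3, b4, hb4, rfl⟩ := hb'
      simp only [map_add, LinearMap.add_apply]
      repeat' refine add_mem ?_ ?_
      all_goals refine H _ _ _ _ ‹_› ‹_› (by norm_num)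
    intro x hx
    exact hlcs (hAg_le_lcs 4 4 (by norm_num) (by norm_num) le_rfl hx)
  -- finrank counting
  have hsum : ∀ p q : Submodule ℂ A, Disjoint p q →
      Module.finrank ℂ (p ⊔ q : Submodule ℂ A) = Module.finrank ℂ p + Module.finrank ℂ q := by
    intro p q h
    have := Submodule.finrank_sup_add_finrank_inf_eq p q
    rw [h.eq_bot, finrank_bot] at this
    omega
  have hD1 : Disjoint (Ag 1) (Ag 2 ⊔ (Ag 3 ⊔ Ag 4)) := by
    refine (hg.indep 1).mono_right ?_
    refine sup_le (le_iSup₂ (f := fun j (_ : j ≠ 1) => Ag j) 2 (by norm_num)) (sup_le ?_ ?_)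
    · exact le_iSup₂ (f := fun j (_ : j ≠ 1) => Ag j) 3 (by norm_num)
    · exact le_iSup₂ (f := fun j (_ : j ≠ 1) => Ag j) 4 (by norm_num)
  have hD2 : Disjoint (Ag 2) (Ag 3 ⊔ Ag 4) := by
    refine (hg.indep 2).mono_right ?_
    refine sup_le ?_ ?_
    · exact le_iSup₂ (f := fun j (_ : j ≠ 2) => Ag j) 3 (by norm_num)
    · exact le_iSup₂ (f := fun j (_ : j ≠ 2) => Ag j) 4 (by norm_num)
  have hD3 : Disjoint (Ag 3) (Ag 4) := by
    refine (hg.indep 3).mono_right ?_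
    exact le_iSup₂ (f := fun j (_ : j ≠ 3) => Ag j) 4 (by norm_num)
  have htopeq : (⊤ : Submodule ℂ A) = Ag 1 ⊔ (Ag 2 ⊔ (Ag 3 ⊔ Ag 4)) := by
    refine le_antisymm ?_ le_top
    refine htople.trans ?_
    rw [sup_assoc, sup_assoc]
  have hcount : Module.finrank ℂ (Ag 2) + Module.finrank ℂ (Ag 4) = 2 := by
    have e1 : Module.finrank ℂ (⊤ : Submodule ℂ A) = 6 := by
      rw [finrank_top]; exact hdim
    rw [htopeq, hsum _ _ hD1, hsum _ _ hD2, hsum _ _ hD3, h1, h2] at e1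
    omega
  have hd4 : Module.finrank ℂ (Ag 4) ≠ 0 := by
    intro h
    exact hAg4ne (Submodule.finrank_eq_zero.mp h)
  have hd2 : Module.finrank ℂ (Ag 2) = 1 := by
    rcases Nat.eq_zero_or_pos (Module.finrank ℂ (Ag 2)) with h | h
    · exfalso
      have hbot2 : Ag 2 = ⊥ := Submodule.finrank_eq_zero.mp h
      have : Ag 3 ≤ (⊥ : Submodule ℂ A) := by
        intro x hx
        have := hS3 x hx
        refine (Submodule.span_le.mpr ?_ : _ ≤ (⊥ : Submodule ℂ A)) this
        rintro z ⟨u, hu, v, hv, rfl⟩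
        rw [hbot2] at hv
        simp [show v = 0 from by simpa using hv]
      have : Ag 3 = ⊥ := le_antisymm this bot_le
      rw [this, finrank_bot] at h2
      exact absurd h2 (by norm_num)
    · omega
  -- squares vanish on Ag 1
  have sq0 : ∀ x ∈ Ag 1, M.mul x x = 0 := by
    intro x hx
    by_contra hc
    have hcAg2 : M.mul x x ∈ Ag 2 := hg.mul_mem 1 1 x x hx hx
    have hspanc : Ag 2 = Submodule.span ℂ {M.mul x x} := by
      refine (Submodule.eq_of_le_of_finrank_le ?_ ?_).symm
      · exact Submodule.span_le.mpr (by simpa using hcAg2)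
      · rw [hd2, finrank_span_singleton hc]
    have hcx : M.mul (M.mul x x) x = M.mul x (M.mul x x) + M.mul x (M.mul x x) :=
      M.zinbiel x x x
    have huc : ∀ u ∈ Ag 1, ∃ μ : ℂ, M.mul u (M.mul x x) = μ • M.mul x (M.mul x x) := by
      intro u hu
      have hux : M.mul u x ∈ Ag 2 := hg.mul_mem 1 1 u x hu hx
      rw [hspanc, Submodule.mem_span_singleton] at hux
      obtain ⟨μ, hμ⟩ := hux
      have hz := M.zinbiel u x x
      rw [← hμ, map_smul, LinearMap.smul_apply, hcx, smul_add] at hz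
      refine ⟨μ, ?_⟩
      have h2eq : (2 : ℂ) • (μ • M.mul x (M.mul x x)) = (2 : ℂ) • M.mul u (M.mul x x) := by
        rw [two_smul, two_smul]; exact hz
      exact (smul_right_injective A (two_ne_zero : (2:ℂ) ≠ 0) h2eq).symm
    have hle3 : Ag 3 ≤ Submodule.span ℂ {M.mul x (M.mul x x)} := by
      intro w hw
      refine (Submodule.span_le.mpr ?_ :
        _ ≤ Submodule.span ℂ {M.mul x (M.mul x x)}) (hS3 w hw)
      rintro z ⟨u, hu, v, hv, rfl⟩
      rw [hspanc, Submodule.mem_span_singleton] at hv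
      obtain ⟨t, rfl⟩ := hv
      obtain ⟨μ, hμ⟩ := huc u hu
      rw [map_smul, hμ]
      exact Submodule.smul_mem _ t (Submodule.smul_mem _ μ (Submodule.mem_span_singleton_self _))
    have hbad : (2 : ℕ) ≤ 1 := by
      rw [← h2]
      refine le_trans (Submodule.finrank_mono hle3) ?_
      by_cases h0 : M.mul x (M.mul x x) = 0
      · rw [h0, Submodule.span_zero_singleton, finrank_bot]
        norm_num
      · rw [finrank_span_singleton h0]
    omega
  -- basis of Ag 1
  have b := Module.finBasisOfFinrankEq ℂ (Ag 1) h1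
  set e1 : A := (b 0 : A) with he1def
  set e2 : A := (b 1 : A) with he2def
  have he1 : e1 ∈ Ag 1 := (b 0).2
  have he2 : e2 ∈ Ag 1 := (b 1).2
  have hAg1le : Ag 1 ≤ Submodule.span ℂ {e1, e2} := by
    intro x hx
    have hr := b.sum_repr ⟨x, hx⟩
    rw [Fin.sum_univ_two] at hr
    have hx' : x = b.repr ⟨x, hx⟩ 0 • e1 + b.repr ⟨x, hx⟩ 1 • e2 := by
      have h := congrArg ((Ag 1).subtype) hr
      simpa [he1def, he2def] using h.symm
    rw [hx']
    exact add_mem (Submodule.smul_mem _ _ (Submodule.subset_span (by simp)))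
      (Submodule.smul_mem _ _ (Submodule.subset_span (by simp)))
  have hanti : ∀ x y : A, x ∈ Ag 1 → y ∈ Ag 1 → M.mul y x = - M.mul x y := by
    intro x y hx hy
    have h0 := sq0 (x + y) (add_mem hx hy)
    simp only [map_add, LinearMap.add_apply, sq0 x hx, sq0 y hy, zero_add, add_zero] at h0
    exact eq_neg_of_add_eq_zero_left h0
  have q11 : M.mul e1 e1 = 0 := sq0 e1 he1
  have q22 : M.mul e2 e2 = 0 := sq0 e2 he2
  set e3 : A := M.mul e1 e2 with he3def
  have he3 : e3 ∈ Ag 2 := hg.mul_mem 1 1 e1 e2 he1 he2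
  have q21 : M.mul e2 e1 = -e3 := hanti e1 e2 he1 he2
  have hAg2le : Ag 2 ≤ Submodule.span ℂ {e3} := by
    intro w hw
    refine (Submodule.span_le.mpr ?_ : _ ≤ Submodule.span ℂ {e3}) (hS2 w hw)
    rintro z ⟨u, hu, v, hv, rfl⟩
    obtain ⟨a, b', hab⟩ := Submodule.mem_span_pair.mp (hAg1le hu)
    obtain ⟨c, d, hcd⟩ := Submodule.mem_span_pair.mp (hAg1le hv)
    rw [← hab, ← hcd]
    have hexp : M.mul (a • e1 + b' • e2) (c • e1 + d • e2) = (a * d - b' * c) • e3 := by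
      simp only [map_add, map_smul, LinearMap.add_apply, LinearMap.smul_apply,
        q11, q22, q21, ← he3def, smul_zero, smul_neg, zero_add, add_zero, smul_smul]
      module
    rw [hexp]
    exact Submodule.smul_mem _ _ (Submodule.mem_span_singleton_self _)
  set e4 : A := M.mul e1 e3 with he4def
  set e5 : A := M.mul e2 e3 with he5def
  have he4 : e4 ∈ Ag 3 := hg.mul_mem 1 2 e1 e3 he1 he3
  have he5 : e5 ∈ Ag 3 := hg.mul_mem 1 2 e2 e3 he2 he3
  have q31 : M.mul e3 e1 = 0 := by
    have hz := M.zinbiel e1 e2 e1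
    rw [← he3def, q21] at hz
    simpa using hz
  have q32 : M.mul e3 e2 = 0 := by
    have hz := M.zinbiel e1 e2 e2
    rw [← he3def, q22] at hz
    simpa using hz
  have q14 : M.mul e1 e4 = 0 := by
    have hz := M.zinbiel e1 e1 e3
    rw [q11, ← he4def, q31] at hz
    simpa using hz.symm
  set e6 : A := M.mul e1 e5 with he6def
  have he6 : e6 ∈ Ag 4 := hg.mul_mem 1 3 e1 e5 he1 he5
  have q33 : M.mul e3 e3 = e6 := by
    have hz := M.zinbiel e1 e2 e3
    rw [← he3def, ← he5def, ← he6def, q32] at hz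
    simpa using hz
  have q24 : M.mul e2 e4 = -e6 := by
    have hz := M.zinbiel e2 e1 e3
    rw [q21, ← he4def, q31] at hz
    simp only [map_neg, LinearMap.neg_apply, q33] at hz
    simpa using hz.symm
  have q25 : M.mul e2 e5 = 0 := by
    have hz := M.zinbiel e2 e2 e3
    rw [q22, ← he5def, q32] at hz
    simpa using hz.symm
  have q41 : M.mul e4 e1 = 0 := by
    have hz := M.zinbiel e1 e3 e1
    rw [← he4def, q31, q14] at hz
    simpa using hz
  have q42 : M.mul e4 e2 = e6 := by
    have hz := M.zinbiel e1 e3 e2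
    rw [← he4def, q32, ← he5def, ← he6def] at hz
    simpa using hz
  have q51 : M.mul e5 e1 = -e6 := by
    have hz := M.zinbiel e2 e3 e1
    rw [← he5def, q31, ← he4def, q24] at hz
    simpa using hz
  have q52 : M.mul e5 e2 = 0 := by
    have hz := M.zinbiel e2 e3 e2
    rw [← he5def, q32, q25] at hz
    simpa using hz
  have hAg3le : Ag 3 ≤ Submodule.span ℂ {e4, e5} := by
    intro w hw
    refine (Submodule.span_le.mpr ?_ : _ ≤ Submodule.span ℂ {e4, e5}) (hS3 w hw)
    rintro z ⟨u, hu, v, hv, rfl⟩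
    obtain ⟨a, b', hab⟩ := Submodule.mem_span_pair.mp (hAg1le hu)
    obtain ⟨t, ht⟩ := Submodule.mem_span_singleton.mp (hAg2le hv)
    rw [← hab, ← ht]
    have hexp : M.mul (a • e1 + b' • e2) (t • e3) = (a * t) • e4 + (b' * t) • e5 := by
      simp only [map_add, map_smul, LinearMap.add_apply, LinearMap.smul_apply,
        ← he4def, ← he5def, smul_smul]
      module
    rw [hexp]
    exact add_mem (Submodule.smul_mem _ _ (Submodule.subset_span (by simp)))
      (Submodule.smul_mem _ _ (Submodule.subset_span (by simp)))
  have hAg4le : Ag 4 ≤ Submodule.span ℂ {e6} := by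
    intro w hw
    refine (Submodule.span_le.mpr ?_ : _ ≤ Submodule.span ℂ {e6}) (hS4 w hw)
    rintro z ⟨u, hu, v, hv, rfl⟩
    obtain ⟨a, b', hab⟩ := Submodule.mem_span_pair.mp (hAg1le hu)
    obtain ⟨st, t, hst⟩ := Submodule.mem_span_pair.mp (hAg3le hv)
    rw [← hab, ← hst]
    have hexp : M.mul (a • e1 + b' • e2) (st • e4 + t • e5) = (a * t - b' * st) • e6 := by
      simp only [map_add, map_smul, LinearMap.add_apply, LinearMap.smul_apply,
        q14, q24, q25, ← he6def, smul_zero, smul_neg, zero_add, add_zero, smul_smul]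
      module
    rw [hexp]
    exact Submodule.smul_mem _ _ (Submodule.mem_span_singleton_self _)
  -- high degree products vanish
  have q16 : M.mul e1 e6 = 0 := hz0 1 4 _ _ he1 he6 (by norm_num)
  have q26 : M.mul e2 e6 = 0 := hz0 1 4 _ _ he2 he6 (by norm_num)
  have q34 : M.mul e3 e4 = 0 := hz0 2 3 _ _ he3 he4 (by norm_num)
  have q35 : M.mul e3 e5 = 0 := hz0 2 3 _ _ he3 he5 (by norm_num)
  have q36 : M.mul e3 e6 = 0 := hz0 2 4 _ _ he3 he6 (by norm_num)
  have q43 : M.mul e4 e3 = 0 := hz0 3 2 _ _ he4 he3 (by norm_num)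
  have q44 : M.mul e4 e4 = 0 := hz0 3 3 _ _ he4 he4 (by norm_num)
  have q45 : M.mul e4 e5 = 0 := hz0 3 3 _ _ he4 he5 (by norm_num)
  have q46 : M.mul e4 e6 = 0 := hz0 3 4 _ _ he4 he6 (by norm_num)
  have q53 : M.mul e5 e3 = 0 := hz0 3 2 _ _ he5 he3 (by norm_num)
  have q54 : M.mul e5 e4 = 0 := hz0 3 3 _ _ he5 he4 (by norm_num)
  have q55 : M.mul e5 e5 = 0 := hz0 3 3 _ _ he5 he5 (by norm_num)
  have q56 : M.mul e5 e6 = 0 := hz0 3 4 _ _ he5 he6 (by norm_num)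
  have q61 : M.mul e6 e1 = 0 := hz0 4 1 _ _ he6 he1 (by norm_num)
  have q62 : M.mul e6 e2 = 0 := hz0 4 1 _ _ he6 he2 (by norm_num)
  have q63 : M.mul e6 e3 = 0 := hz0 4 2 _ _ he6 he3 (by norm_num)
  have q64 : M.mul e6 e4 = 0 := hz0 4 3 _ _ he6 he4 (by norm_num)
  have q65 : M.mul e6 e5 = 0 := hz0 4 3 _ _ he6 he5 (by norm_num)
  have q66 : M.mul e6 e6 = 0 := hz0 4 4 _ _ he6 he6 (by norm_num)
  -- the basis
  set v : Fin 6 → A := ![e1, e2, e3, e4, e5, e6] with hv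
  have hspan : ⊤ ≤ Submodule.span ℂ (Set.range v) := by
    refine htople.trans (sup_le (sup_le (sup_le ?_ ?_) ?_) ?_)
    · refine hAg1le.trans (Submodule.span_mono ?_)
      rintro w (rfl | rfl)
      exacts [⟨0, rfl⟩, ⟨1, rfl⟩]
    · refine hAg2le.trans (Submodule.span_mono ?_)
      rintro w rfl
      exact ⟨2, rfl⟩
    · refine hAg3le.trans (Submodule.span_mono ?_)
      rintro w (rfl | rfl)
      exacts [⟨3, rfl⟩, ⟨4, rfl⟩]
    · refine hAg4le.trans (Submodule.span_mono ?_)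
      rintro w rfl
      exact ⟨5, rfl⟩
  have hcard : Fintype.card (Fin 6) = Module.finrank ℂ A := by simp [hdim]
  refine ⟨basisOfTopLeSpanOfCardEqFinrank v hspan hcard, ?_⟩
  intro i j
  rw [coe_basisOfTopLeSpanOfCardEqFinrank]
  fin_cases i <;> fin_cases j
  · exact q11
  · rfl
  · rfl
  · exact q14
  · rfl
  · exact q16
  · exact q21
  · exact q22
  · rfl
  · exact q24
  · exact q25
  · exact q26
  · exact q31
  · exact q32
  · exact q33
  · exact q34
  · exact q35
  · exact q36
  · exact q41
  · exact q42
  · exact q43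
  · exact q44
  · exact q45
  · exact q46
  · exact q51
  · exact q52
  · exact q53
  · exact q54
  · exact q55
  · exact q56
  · exact q61
  · exact q62
  · exact q63
  · exact q64
  · exact q65
  · exact q66


end ZinbielStr
end

section
/- Every 7-dimensional naturally graded quasi-filiform complex Zinbiel algebra of type A_(3) is isomorphic to the algebra with basis e_1, …, e_7 and products e_1∘e_2 = e_3, e_1∘e_3 = e_4, e_1∘e_5 = e_6, e_1∘e_6 = e_7, e_2∘e_1 = −e_3, e_2∘e_3 = e_5, e_2∘e_4 = −e_6, e_3∘e_3 = e_6, e_4∘e_2 = e_6, e_4∘e_3 = 2e_7, e_5∘e_1 = −e_6, all other products of basis vectors being zero. -/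
namespace ZinbielStr

variable {A : Type*} [AddCommGroup A] [Module ℂ A]

section Aux

open Submodule Module

variable (Ag : ℕ → Submodule ℂ A)

/-- `D Ag c = ⨆ j ≥ c, Ag j`. -/
def D (c : ℕ) : Submodule ℂ A := ⨆ j, ⨆ (_ : c ≤ j), Ag j

lemma D_eq (c : ℕ) : D Ag c = ⨆ j, ⨆ (_ : c ≤ j), Ag j := rfl

lemma Ag_le_D {j c : ℕ} (h : c ≤ j) : Ag j ≤ D Ag c :=
  le_iSup₂ (f := fun j (_ : c ≤ j) => Ag j) j h

lemma D_mono {c d : ℕ} (h : c ≤ d) : D Ag d ≤ D Ag c :=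
  iSup₂_le fun j hj => Ag_le_D Ag (h.trans hj)

lemma D_le_sup (c : ℕ) : D Ag c ≤ Ag c ⊔ D Ag (c + 1) := by
  refine iSup₂_le fun j hj => ?_
  rcases eq_or_lt_of_le hj with rfl | hlt
  · exact le_sup_left
  · exact le_trans (Ag_le_D Ag hlt) le_sup_right

lemma D_le_ne (c i : ℕ) (h : i < c) : D Ag c ≤ ⨆ j, ⨆ (_ : j ≠ i), Ag j :=
  iSup₂_le fun j hj => le_iSup₂ (f := fun j (_ : j ≠ i) => Ag j) j (by omega)

lemma D_bot (hb : ∀ k, 5 < k → Ag k = ⊥) {c : ℕ} (hc : 5 < c) : D Ag c = ⊥ := by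
  refine le_bot_iff.mp (iSup₂_le fun j hj => ?_)
  rw [hb j (lt_of_lt_of_le hc hj)]

lemma mem_D_split {c : ℕ} {x : A} (hx : x ∈ D Ag c) :
    ∃ y z, y ∈ Ag c ∧ z ∈ D Ag (c + 1) ∧ x = y + z := by
  have h := D_le_sup Ag c hx
  rw [Submodule.mem_sup] at h
  obtain ⟨y, hy, z, hz, h⟩ := h
  exact ⟨y, z, hy, hz, h.symm⟩

variable (M : ZinbielStr A)

lemma mul_Ag_D (hmul : ∀ i j x y, x ∈ Ag i → y ∈ Ag j → M.mul x y ∈ Ag (i + j))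
    {i c : ℕ} {x : A} (hx : x ∈ Ag i) {y : A} (hy : y ∈ D Ag c) :
    M.mul x y ∈ D Ag (i + c) := by
  have hy' : y ∈ ⨆ (j : {j : ℕ // c ≤ j}), Ag j := by
    rw [D_eq, iSup_subtype'] at hy; exact hy
  refine Submodule.iSup_induction _ (motive := fun w => M.mul x w ∈ D Ag (i + c)) hy' ?_ ?_ ?_
  · rintro ⟨j, hj⟩ z hz
    exact Ag_le_D Ag (by omega) (hmul i j x z hx hz)
  · simp
  · intro a b ha hb
    rw [map_add]; exact add_mem ha hb

lemma mul_D_D (hmul : ∀ i j x y, x ∈ Ag i → y ∈ Ag j → M.mul x y ∈ Ag (i + j))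
    {i c : ℕ} {x : A} (hx : x ∈ D Ag i) {y : A} (hy : y ∈ D Ag c) :
    M.mul x y ∈ D Ag (i + c) := by
  have hx' : x ∈ ⨆ (j : {j : ℕ // i ≤ j}), Ag j := by
    rw [D_eq, iSup_subtype'] at hx; exact hx
  refine Submodule.iSup_induction _ (motive := fun w => M.mul w y ∈ D Ag (i + c)) hx' ?_ ?_ ?_
  · rintro ⟨j, hj⟩ z hz
    exact D_mono Ag (Nat.add_le_add_right hj c) (mul_Ag_D Ag M hmul hz hy)
  · simp
  · intro a b ha hb
    rw [map_add, LinearMap.add_apply]; exact add_mem ha hb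

lemma exists_proj (hindep : iSupIndep Ag) (hsup : (⨆ j, Ag j) = ⊤) (i : ℕ) :
    ∃ f : A →ₗ[ℂ] A, (∀ x ∈ Ag i, f x = x) ∧
      ∀ x ∈ (⨆ j, ⨆ (_ : j ≠ i), Ag j : Submodule ℂ A), f x = 0 := by
  have hdisj : Disjoint (Ag i) (⨆ j, ⨆ (_ : j ≠ i), Ag j) := hindep i
  have hcod : Codisjoint (Ag i) (⨆ j, ⨆ (_ : j ≠ i), Ag j) := by
    rw [codisjoint_iff_le_sup, ← hsup]
    refine iSup_le fun j => ?_
    by_cases hj : j = i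
    · subst hj; exact le_sup_left
    · exact le_trans (le_iSup₂ (f := fun j (_ : j ≠ i) => Ag j) j hj) le_sup_right
  have hc : IsCompl (Ag i) (⨆ j, ⨆ (_ : j ≠ i), Ag j) := ⟨hdisj, hcod⟩
  refine ⟨(Ag i).subtype.comp (Submodule.projectionOnto _ _ hc), ?_, ?_⟩
  · intro x hx
    have := Submodule.projectionOnto_apply_left hc ⟨x, hx⟩
    exact congrArg (Submodule.subtype (Ag i)) this
  · intro x hx
    have := Submodule.projectionOnto_apply_of_mem_right hc hx
    rw [LinearMap.comp_apply, this, map_zero]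

lemma hsup_of (M : ZinbielStr A) (hg : M.IsNaturalGrading 5 Ag) : (⨆ j, Ag j) = ⊤ := by
  refine eq_top_iff.mpr ?_
  have h := hg.lcs_eq 1 le_rfl (by norm_num)
  rw [show M.lcs 1 = ⊤ from rfl] at h
  rw [h]
  exact iSup₂_le fun j _ => le_iSup Ag j

lemma proj_lemma (M : ZinbielStr A) (hg : M.IsNaturalGrading 5 Ag) (k : ℕ)
    (hk1 : 1 ≤ k) (hk4 : k ≤ 4) :
    Ag (k + 1) ≤ Submodule.span ℂ {w | ∃ x ∈ Ag 1, ∃ y ∈ Ag k, w = M.mul x y} := by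
  obtain ⟨k', rfl⟩ : ∃ k', k = k' + 1 := ⟨k - 1, by omega⟩
  intro z hz
  obtain ⟨f, hf1, hf2⟩ := exists_proj Ag hg.indep (hsup_of Ag M hg) (k' + 2)
  have hzf : f z = z := hf1 z hz
  have hzspan : z ∈ M.lcs (k' + 2) := by
    rw [hg.lcs_eq (k' + 2) (by omega) (by omega), ← D_eq]
    exact Ag_le_D Ag le_rfl hz
  rw [lcs] at hzspan
  set T := {w | ∃ x ∈ Ag 1, ∃ y ∈ Ag (k' + 1), w = M.mul x y} with hT
  have kill : ∀ u ∈ D Ag (k' + 3), f u = 0 := fun u hu =>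
    hf2 u (D_le_ne Ag (k' + 3) (k' + 2) (by omega) hu)
  have key : ∀ w ∈ {w | ∃ a b, b ∈ M.lcs (k' + 1) ∧ w = M.mul a b},
      f w ∈ Submodule.span ℂ T := by
    rintro w ⟨a, b, hb, rfl⟩
    have ha : a ∈ D Ag 1 := by
      rw [D_eq, ← hg.lcs_eq 1 le_rfl (by norm_num)]
      exact Submodule.mem_top
    obtain ⟨a1, r, ha1, hr, rfl⟩ := mem_D_split Ag ha
    have hbD : b ∈ D Ag (k' + 1) := by
      rw [D_eq, ← hg.lcs_eq (k' + 1) (by omega) (by omega)]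
      exact hb
    obtain ⟨bk, s, hbk, hs, rfl⟩ := mem_D_split Ag hbD
    have expand : M.mul (a1 + r) (bk + s) =
        M.mul a1 bk + (M.mul a1 s + (M.mul r bk + M.mul r s)) := by
      simp only [map_add, LinearMap.add_apply]
      abel
    have h1 : f (M.mul a1 bk) = M.mul a1 bk := by
      have hm := hg.mul_mem 1 (k' + 1) a1 bk ha1 hbk
      have e : 1 + (k' + 1) = k' + 2 := by omega
      rw [e] at hm
      exact hf1 _ hm
    have h2 : f (M.mul a1 s) = 0 := by
      refine kill _ ?_
      have h := mul_Ag_D Ag M hg.mul_mem ha1 hs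
      have e : 1 + (k' + 1 + 1) = k' + 3 := by omega
      rwa [e] at h
    have h3 : f (M.mul r bk) = 0 := by
      refine kill _ ?_
      have h := mul_D_D Ag M hg.mul_mem hr (Ag_le_D Ag le_rfl hbk)
      have e : 1 + 1 + (k' + 1) = k' + 3 := by omega
      rwa [e] at h
    have h4 : f (M.mul r s) = 0 := by
      refine kill _ ?_
      have h := mul_D_D Ag M hg.mul_mem hr hs
      exact D_mono Ag (by omega) h
    have : f (M.mul (a1 + r) (bk + s)) = M.mul a1 bk := by
      rw [expand, map_add, map_add, map_add, h1, h2, h3, h4]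
      abel
    rw [this]
    exact Submodule.subset_span ⟨a1, ha1, bk, hbk, rfl⟩
  have : f z ∈ Submodule.span ℂ T := by
    refine Submodule.span_induction (p := fun w _ => f w ∈ Submodule.span ℂ T) key ?_ ?_ ?_ hzspan
    · simp
    · intro x y _ _ hx hy
      rw [map_add]; exact add_mem hx hy
    · intro c x _ hx
      rw [map_smul]; exact Submodule.smul_mem _ _ hx
  rwa [hzf] at this

lemma finrank_span_singleton_le' [FiniteDimensional ℂ A] (y : A) :
    Module.finrank ℂ (Submodule.span ℂ {y}) ≤ 1 := by
  by_cases h : y = 0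
  · subst h
    rw [Submodule.span_zero_singleton]
    simp [finrank_bot]
  · rw [finrank_span_singleton h]

lemma pair_indep [FiniteDimensional ℂ A] {S : Submodule ℂ A}
    (hfr : Module.finrank ℂ S = 2) {x y : A} (hle : S ≤ Submodule.span ℂ {x, y}) :
    ∀ s t : ℂ, s • x + t • y = 0 → s = 0 ∧ t = 0 := by
  have main : ∀ a b : A, S ≤ Submodule.span ℂ {a, b} → a ∈ Submodule.span ℂ {b} → False := by
    intro a b hle' ha
    have h1 : Submodule.span ℂ {a, b} ≤ Submodule.span ℂ {b} := by
      rw [Submodule.span_le]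
      rintro z (rfl | rfl)
      · exact ha
      · exact Submodule.mem_span_singleton_self _
    have h2 : (2 : ℕ) ≤ 1 := by
      calc 2 = Module.finrank ℂ S := hfr.symm
        _ ≤ Module.finrank ℂ (Submodule.span ℂ {b}) :=
            Submodule.finrank_mono (le_trans hle' h1)
        _ ≤ 1 := finrank_span_singleton_le' b
    omega
  intro s t hst
  constructor
  · by_contra hs
    refine main x y hle ?_
    have h1 : s⁻¹ • (s • x + t • y) = 0 := by rw [hst, smul_zero]
    simp only [smul_add, smul_smul] at h1
    rw [inv_mul_cancel₀ hs, one_smul] at h1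
    have h2 : x = (-(s⁻¹ * t)) • y := by linear_combination (norm := module) h1
    rw [h2]
    exact Submodule.smul_mem _ _ (Submodule.mem_span_singleton_self _)
  · by_contra ht
    refine main y x (le_trans hle (by rw [Set.pair_comm])) ?_
    have h1 : t⁻¹ • (s • x + t • y) = 0 := by rw [hst, smul_zero]
    simp only [smul_add, smul_smul] at h1
    rw [inv_mul_cancel₀ ht, one_smul] at h1
    have h2 : y = (-(t⁻¹ * s)) • x := by linear_combination (norm := module) h1
    rw [h2]
    exact Submodule.smul_mem _ _ (Submodule.mem_span_singleton_self _)

lemma vec7_five {α : Type*} (a0 a1 a2 a3 a4 a5 a6 : α) :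
    ![a0, a1, a2, a3, a4, a5, a6] (5 : Fin 7) = a5 := rfl

lemma vec7_six {α : Type*} (a0 a1 a2 a3 a4 a5 a6 : α) :
    ![a0, a1, a2, a3, a4, a5, a6] (6 : Fin 7) = a6 := rfl

lemma vec_cons_five {α : Type*} (x : α) (u : Fin 6 → α) :
    Matrix.vecCons x u (5 : Fin 7) = u 4 := rfl

lemma vec_cons_six {α : Type*} (x : α) (u : Fin 6 → α) :
    Matrix.vecCons x u (6 : Fin 7) = u 5 := rfl

lemma vec_cons_five' {α : Type*} (x : α) (u : Fin 5 → α) :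
    Matrix.vecCons x u (5 : Fin 6) = u 4 := rfl

set_option maxHeartbeats 1000000 in
lemma assemble [FiniteDimensional ℂ A] (M : ZinbielStr A) (Ag : ℕ → Submodule ℂ A)
    (hindep : iSupIndep Ag) (hsup : (⨆ j, Ag j) = ⊤)
    (hrank : Module.finrank ℂ A = 7) (hb : ∀ k, 5 < k → Ag k = ⊥)
    (hmul : ∀ i j x y, x ∈ Ag i → y ∈ Ag j → M.mul x y ∈ Ag (i + j))
    (v1 v2 v3 v4 v5 v6 v7 : A)
    (m1 : v1 ∈ Ag 1) (m2 : v2 ∈ Ag 1) (m3 : v3 ∈ Ag 2) (m4 : v4 ∈ Ag 3)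
    (m5 : v5 ∈ Ag 3) (m6 : v6 ∈ Ag 4) (m7 : v7 ∈ Ag 5)
    (i12 : ∀ s t : ℂ, s • v1 + t • v2 = 0 → s = 0 ∧ t = 0)
    (i45 : ∀ s t : ℂ, s • v4 + t • v5 = 0 → s = 0 ∧ t = 0)
    (n3 : v3 ≠ 0) (n6 : v6 ≠ 0) (n7 : v7 ≠ 0)
    (t11 : M.mul v1 v1 = 0) (t12 : M.mul v1 v2 = v3)
    (t21 : M.mul v2 v1 = -v3) (t22 : M.mul v2 v2 = 0)
    (t13 : M.mul v1 v3 = v4) (t23 : M.mul v2 v3 = v5)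
    (t31 : M.mul v3 v1 = 0) (t32 : M.mul v3 v2 = 0)
    (t14 : M.mul v1 v4 = 0) (t15 : M.mul v1 v5 = v6)
    (t24 : M.mul v2 v4 = -v6) (t25 : M.mul v2 v5 = 0)
    (t41 : M.mul v4 v1 = 0) (t42 : M.mul v4 v2 = v6)
    (t51 : M.mul v5 v1 = -v6) (t52 : M.mul v5 v2 = 0)
    (t33 : M.mul v3 v3 = v6)
    (t16 : M.mul v1 v6 = v7) (t26 : M.mul v2 v6 = 0)
    (t61 : M.mul v6 v1 = 0) (t62 : M.mul v6 v2 = 0)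
    (t34 : M.mul v3 v4 = 0) (t35 : M.mul v3 v5 = 0)
    (t43 : M.mul v4 v3 = (2 : ℂ) • v7) (t53 : M.mul v5 v3 = 0) :
    ∃ e : Basis (Fin 7) ℂ A, ∀ i j : Fin 7,
      M.mul (e i) (e j) =
        ![![0, e 2, e 3, 0, e 5, e 6, 0],
           ![-e 2, 0, e 4, -e 5, 0, 0, 0],
           ![0, 0, e 5, 0, 0, 0, 0],
           ![0, e 5, (2 : ℂ) • e 6, 0, 0, 0, 0],
           ![-e 5, 0, 0, 0, 0, 0, 0],
           ![0, 0, 0, 0, 0, 0, 0],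
           ![0, 0, 0, 0, 0, 0, 0]] i j := by
  have hz : ∀ i j (x y : A), x ∈ Ag i → y ∈ Ag j → 5 < i + j → M.mul x y = 0 := by
    intro i j x y hx hy hij
    have h := hmul i j x y hx hy
    rw [hb _ hij] at h
    simpa using h
  have z17 : M.mul v1 v7 = 0 := hz 1 5 _ _ m1 m7 (by norm_num)
  have z27 : M.mul v2 v7 = 0 := hz 1 5 _ _ m2 m7 (by norm_num)
  have z71 : M.mul v7 v1 = 0 := hz 5 1 _ _ m7 m1 (by norm_num)
  have z72 : M.mul v7 v2 = 0 := hz 5 1 _ _ m7 m2 (by norm_num)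
  have z36 : M.mul v3 v6 = 0 := hz 2 4 _ _ m3 m6 (by norm_num)
  have z63 : M.mul v6 v3 = 0 := hz 4 2 _ _ m6 m3 (by norm_num)
  have z37 : M.mul v3 v7 = 0 := hz 2 5 _ _ m3 m7 (by norm_num)
  have z73 : M.mul v7 v3 = 0 := hz 5 2 _ _ m7 m3 (by norm_num)
  have z44 : M.mul v4 v4 = 0 := hz 3 3 _ _ m4 m4 (by norm_num)
  have z45 : M.mul v4 v5 = 0 := hz 3 3 _ _ m4 m5 (by norm_num)
  have z54 : M.mul v5 v4 = 0 := hz 3 3 _ _ m5 m4 (by norm_num)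
  have z55 : M.mul v5 v5 = 0 := hz 3 3 _ _ m5 m5 (by norm_num)
  have z46 : M.mul v4 v6 = 0 := hz 3 4 _ _ m4 m6 (by norm_num)
  have z64 : M.mul v6 v4 = 0 := hz 4 3 _ _ m6 m4 (by norm_num)
  have z56 : M.mul v5 v6 = 0 := hz 3 4 _ _ m5 m6 (by norm_num)
  have z65 : M.mul v6 v5 = 0 := hz 4 3 _ _ m6 m5 (by norm_num)
  have z66 : M.mul v6 v6 = 0 := hz 4 4 _ _ m6 m6 (by norm_num)
  have z47 : M.mul v4 v7 = 0 := hz 3 5 _ _ m4 m7 (by norm_num)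
  have z74 : M.mul v7 v4 = 0 := hz 5 3 _ _ m7 m4 (by norm_num)
  have z57 : M.mul v5 v7 = 0 := hz 3 5 _ _ m5 m7 (by norm_num)
  have z75 : M.mul v7 v5 = 0 := hz 5 3 _ _ m7 m5 (by norm_num)
  have z67 : M.mul v6 v7 = 0 := hz 4 5 _ _ m6 m7 (by norm_num)
  have z76 : M.mul v7 v6 = 0 := hz 5 4 _ _ m7 m6 (by norm_num)
  have z77 : M.mul v7 v7 = 0 := hz 5 5 _ _ m7 m7 (by norm_num)
  -- linear independence
  obtain ⟨f1, hf1a, hf1b⟩ := exists_proj Ag hindep hsup 1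
  obtain ⟨f2, hf2a, hf2b⟩ := exists_proj Ag hindep hsup 2
  obtain ⟨f3, hf3a, hf3b⟩ := exists_proj Ag hindep hsup 3
  obtain ⟨f4, hf4a, hf4b⟩ := exists_proj Ag hindep hsup 4
  obtain ⟨f5, hf5a, hf5b⟩ := exists_proj Ag hindep hsup 5
  have kill : ∀ (i j : ℕ), j ≠ i →
      ∀ (f : A →ₗ[ℂ] A), (∀ x ∈ (⨆ l, ⨆ (_ : l ≠ i), Ag l : Submodule ℂ A), f x = 0) →
      ∀ x ∈ Ag j, f x = 0 := by
    intro i j hji f hf x hx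
    exact hf x (le_iSup₂ (f := fun l (_ : l ≠ i) => Ag l) j hji hx)
  have li : LinearIndependent ℂ ![v1, v2, v3, v4, v5, v6, v7] := by
    rw [Fintype.linearIndependent_iff]
    intro g hg
    rw [Fin.sum_univ_seven] at hg
    replace hg : g 0 • v1 + g 1 • v2 + g 2 • v3 + g 3 • v4 + g 4 • v5 +
      g 5 • v6 + g 6 • v7 = 0 := hg
    have e1 : g 0 • v1 + g 1 • v2 = 0 := by
      have h := congrArg f1 hg
      simp only [map_add, map_smul, map_zero] at h
      rw [hf1a v1 m1, hf1a v2 m2, kill 1 2 (by norm_num) f1 hf1b v3 m3,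
        kill 1 3 (by norm_num) f1 hf1b v4 m4, kill 1 3 (by norm_num) f1 hf1b v5 m5,
        kill 1 4 (by norm_num) f1 hf1b v6 m6, kill 1 5 (by norm_num) f1 hf1b v7 m7] at h
      simpa using h
    have e2 : g 2 • v3 = 0 := by
      have h := congrArg f2 hg
      simp only [map_add, map_smul, map_zero] at h
      rw [hf2a v3 m3, kill 2 1 (by norm_num) f2 hf2b v1 m1,
        kill 2 1 (by norm_num) f2 hf2b v2 m2,
        kill 2 3 (by norm_num) f2 hf2b v4 m4, kill 2 3 (by norm_num) f2 hf2b v5 m5,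
        kill 2 4 (by norm_num) f2 hf2b v6 m6, kill 2 5 (by norm_num) f2 hf2b v7 m7] at h
      simpa using h
    have e3 : g 3 • v4 + g 4 • v5 = 0 := by
      have h := congrArg f3 hg
      simp only [map_add, map_smul, map_zero] at h
      rw [hf3a v4 m4, hf3a v5 m5, kill 3 1 (by norm_num) f3 hf3b v1 m1,
        kill 3 1 (by norm_num) f3 hf3b v2 m2, kill 3 2 (by norm_num) f3 hf3b v3 m3,
        kill 3 4 (by norm_num) f3 hf3b v6 m6, kill 3 5 (by norm_num) f3 hf3b v7 m7] at h
      simpa using h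
    have e4 : g 5 • v6 = 0 := by
      have h := congrArg f4 hg
      simp only [map_add, map_smul, map_zero] at h
      rw [hf4a v6 m6, kill 4 1 (by norm_num) f4 hf4b v1 m1,
        kill 4 1 (by norm_num) f4 hf4b v2 m2, kill 4 2 (by norm_num) f4 hf4b v3 m3,
        kill 4 3 (by norm_num) f4 hf4b v4 m4, kill 4 3 (by norm_num) f4 hf4b v5 m5,
        kill 4 5 (by norm_num) f4 hf4b v7 m7] at h
      simpa using h
    have e5 : g 6 • v7 = 0 := by
      have h := congrArg f5 hg
      simp only [map_add, map_smul, map_zero] at h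
      rw [hf5a v7 m7, kill 5 1 (by norm_num) f5 hf5b v1 m1,
        kill 5 1 (by norm_num) f5 hf5b v2 m2, kill 5 2 (by norm_num) f5 hf5b v3 m3,
        kill 5 3 (by norm_num) f5 hf5b v4 m4, kill 5 3 (by norm_num) f5 hf5b v5 m5,
        kill 5 4 (by norm_num) f5 hf5b v6 m6] at h
      simpa using h
    obtain ⟨h0, h1⟩ := i12 _ _ e1
    obtain ⟨h3, h4⟩ := i45 _ _ e3
    have h2 : g 2 = 0 := by
      rcases smul_eq_zero.mp e2 with h | h
      · exact h
      · exact absurd h n3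
    have h5 : g 5 = 0 := by
      rcases smul_eq_zero.mp e4 with h | h
      · exact h
      · exact absurd h n6
    have h6 : g 6 = 0 := by
      rcases smul_eq_zero.mp e5 with h | h
      · exact h
      · exact absurd h n7
    intro i
    fin_cases i <;> assumption
  have hcard : Fintype.card (Fin 7) = Module.finrank ℂ A := by simp [hrank]
  refine ⟨basisOfLinearIndependentOfCardEqFinrank li hcard, ?_⟩
  intro i j
  rw [coe_basisOfLinearIndependentOfCardEqFinrank]
  have V5 : ![v1, v2, v3, v4, v5, v6, v7] (5 : Fin 7) = v6 := rfl
  have V6 : ![v1, v2, v3, v4, v5, v6, v7] (6 : Fin 7) = v7 := rfl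
  fin_cases i <;> fin_cases j <;>
    simp [t11, t12, t21, t22, t13, t23, t31, t32, t14, t15, t24, t25, t41, t42, t51, t52,
      t33, t16, t26, t61, t62, t34, t35, t43, t53, z17, z27, z71, z72, z36, z63, z37, z73,
      z44, z45, z54, z55, z46, z64, z56, z65, z66, z47, z74, z57, z75, z67, z76, z77,
      Matrix.cons_val_succ, Matrix.cons_val_zero, V5, V6, vec7_five, vec7_six, vec_cons_five, vec_cons_six, vec_cons_five',
      Matrix.vecHead, Matrix.vecTail]

end Aux

set_option maxHeartbeats 2000000 in
/-- Every 7-dimensional naturally graded quasi-filiform complex Zinbiel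
algebra of type `A_(3)` is isomorphic to a single explicit algebra. -/
theorem dim7_type_three_classification {A : Type*} [AddCommGroup A] [Module ℂ A]
    [FiniteDimensional ℂ A] (M : ZinbielStr A)
    (Ag : ℕ → Submodule ℂ A)
    (hqf : M.IsQuasiFiliform 7) (hg : M.IsNaturalGrading 5 Ag)
    (h1 : Module.finrank ℂ (Ag 1) = 2) (h2 : Module.finrank ℂ (Ag 3) = 2) :
    ∃ e : Module.Basis (Fin 7) ℂ A, ∀ i j : Fin 7,
      M.mul (e i) (e j) =
        ![![0, e 2, e 3, 0, e 5, e 6, 0],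
           ![-e 2, 0, e 4, -e 5, 0, 0, 0],
           ![0, 0, e 5, 0, 0, 0, 0],
           ![0, e 5, (2 : ℂ) • e 6, 0, 0, 0, 0],
           ![-e 5, 0, 0, 0, 0, 0, 0],
           ![0, 0, 0, 0, 0, 0, 0],
           ![0, 0, 0, 0, 0, 0, 0]] i j := by
  obtain ⟨hrank, hne5', -⟩ := hqf
  have hne5 : M.lcs 5 ≠ ⊥ := hne5'
  have hsup := hsup_of Ag M hg
  -- dimension bookkeeping
  have hDeq : ∀ c, D Ag c = Ag c ⊔ D Ag (c + 1) := fun c =>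
    le_antisymm (D_le_sup Ag c) (sup_le (Ag_le_D Ag le_rfl) (D_mono Ag (Nat.le_succ c)))
  have hdisj : ∀ c, Disjoint (Ag c) (D Ag (c + 1)) := fun c =>
    (hg.indep c).mono_right (D_le_ne Ag (c + 1) c (Nat.lt_succ_self c))
  have hstep : ∀ c, Module.finrank ℂ (D Ag c) =
      Module.finrank ℂ (Ag c) + Module.finrank ℂ (D Ag (c + 1)) := by
    intro c
    have h := Submodule.finrank_sup_add_finrank_inf_eq (Ag c) (D Ag (c + 1))
    rw [disjoint_iff.mp (hdisj c)] at h
    simp only [finrank_bot, add_zero] at h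
    rw [hDeq c, h]
  have hD6 : D Ag 6 = ⊥ := D_bot Ag hg.high_deg (by norm_num)
  have hD5 : D Ag 5 = Ag 5 := by
    have h := hDeq 5
    norm_num at h
    rw [h, hD6, sup_bot_eq]
  have hD1top : D Ag 1 = ⊤ := by
    have h := hg.lcs_eq 1 le_rfl (by norm_num)
    rw [show M.lcs 1 = ⊤ from rfl] at h
    rw [D_eq, ← h]
  have s1 : Module.finrank ℂ (D Ag 1) = Module.finrank ℂ (Ag 1) + Module.finrank ℂ (D Ag 2) :=
    hstep 1
  have s2 : Module.finrank ℂ (D Ag 2) = Module.finrank ℂ (Ag 2) + Module.finrank ℂ (D Ag 3) :=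
    hstep 2
  have s3 : Module.finrank ℂ (D Ag 3) = Module.finrank ℂ (Ag 3) + Module.finrank ℂ (D Ag 4) :=
    hstep 3
  have s4 : Module.finrank ℂ (D Ag 4) = Module.finrank ℂ (Ag 4) + Module.finrank ℂ (D Ag 5) :=
    hstep 4
  have s0 : Module.finrank ℂ (D Ag 1) = 7 := by rw [hD1top, finrank_top, hrank]
  have s5 : Module.finrank ℂ (D Ag 5) = Module.finrank ℂ (Ag 5) := by rw [hD5]
  have hlcs5 : M.lcs 5 = Ag 5 := by
    rw [hg.lcs_eq 5 (by norm_num) le_rfl, ← D_eq, hD5]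
  have hA5ne : Ag 5 ≠ ⊥ := by rw [← hlcs5]; exact hne5
  have hfr5 : Module.finrank ℂ (Ag 5) ≠ 0 := by
    rw [Ne, Submodule.finrank_eq_zero]; exact hA5ne
  have hfr4 : Module.finrank ℂ (Ag 4) ≠ 0 := by
    intro h0
    have hbot : Ag 4 = ⊥ := Submodule.finrank_eq_zero.mp h0
    have hle := proj_lemma Ag M hg 4 (by norm_num) le_rfl
    norm_num at hle
    refine hA5ne (le_bot_iff.mp (le_trans hle ?_))
    rw [Submodule.span_le]
    rintro w ⟨x, hx, y, hy, rfl⟩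
    rw [hbot, Submodule.mem_bot] at hy
    subst hy
    simp
  have hfr2 : Module.finrank ℂ (Ag 2) ≠ 0 := by
    intro h0
    have hbot : Ag 2 = ⊥ := Submodule.finrank_eq_zero.mp h0
    have hle := proj_lemma Ag M hg 2 (by norm_num) (by norm_num)
    norm_num at hle
    have h3bot : Ag 3 = ⊥ := by
      refine le_bot_iff.mp (le_trans hle ?_)
      rw [Submodule.span_le]
      rintro w ⟨x, hx, y, hy, rfl⟩
      rw [hbot, Submodule.mem_bot] at hy
      subst hy
      simp
    rw [h3bot] at h2
    simp only [finrank_bot] at h2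
    exact absurd h2 (by norm_num)
  have hr2 : Module.finrank ℂ (Ag 2) = 1 := by omega
  have hr4 : Module.finrank ℂ (Ag 4) = 1 := by omega
  have hr5 : Module.finrank ℂ (Ag 5) = 1 := by omega
  -- a nonzero product of degree-one elements
  have hA2ne : Ag 2 ≠ ⊥ := by
    intro h
    rw [h] at hr2
    simp only [finrank_bot] at hr2
    exact absurd hr2 (by norm_num)
  obtain ⟨z2, hz2, hz2ne⟩ := Submodule.exists_mem_ne_zero_of_ne_bot hA2ne
  have hexists : ∃ u ∈ Ag 1, ∃ v ∈ Ag 1, M.mul u v ≠ 0 := by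
    by_contra hcon
    push_neg at hcon
    have hle := proj_lemma Ag M hg 1 le_rfl (by norm_num)
    norm_num at hle
    have hmem := hle hz2
    have hTz : {w | ∃ x ∈ Ag 1, ∃ y ∈ Ag 1, w = M.mul x y} ⊆ {(0 : A)} := by
      rintro w ⟨x, hx, y, hy, rfl⟩
      simp [hcon x hx y hy]
    have : z2 ∈ Submodule.span ℂ {(0 : A)} := Submodule.span_mono hTz hmem
    rw [Submodule.span_zero_singleton, Submodule.mem_bot] at this
    exact hz2ne this
  obtain ⟨u, hu, v, hv, huv⟩ := hexists
  obtain ⟨e3, he3⟩ : ∃ w, w = M.mul u v := ⟨_, rfl⟩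
  have he3ne : e3 ≠ 0 := by rw [he3]; exact huv
  have he3m : e3 ∈ Ag 2 := by
    rw [he3]
    have h := hg.mul_mem 1 1 u v hu hv
    norm_num at h
    exact h
  have hA2eq : Submodule.span ℂ {e3} = Ag 2 := by
    apply Submodule.eq_of_le_of_finrank_le
    · rw [Submodule.span_le, Set.singleton_subset_iff]
      exact he3m
    · rw [hr2, finrank_span_singleton he3ne]
  have hA2le : Ag 2 ≤ Submodule.span ℂ {e3} := le_of_eq hA2eq.symm
  -- antisymmetry on `Ag 1`
  have hanti : ∀ b ∈ Ag 1, ∀ c ∈ Ag 1, M.mul b c + M.mul c b = 0 := by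
    intro b hb c hc
    by_contra hw
    have hwm : M.mul b c + M.mul c b ∈ Ag 2 := by
      have ha := hg.mul_mem 1 1 b c hb hc
      have hbq := hg.mul_mem 1 1 c b hc hb
      norm_num at ha hbq
      exact add_mem ha hbq
    obtain ⟨t, ht⟩ := Submodule.mem_span_singleton.mp (hA2le hwm)
    have htne : t ≠ 0 := by
      rintro rfl
      rw [zero_smul] at ht
      exact hw ht.symm
    have key : ∀ a ∈ Ag 1, M.mul a e3 ∈ Submodule.span ℂ {M.mul e3 c} := by
      intro a ha
      have hzb := M.zinbiel a b c
      have habm : M.mul a b ∈ Ag 2 := by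
        have h := hg.mul_mem 1 1 a b ha hb
        norm_num at h
        exact h
      obtain ⟨sc, hsc⟩ := Submodule.mem_span_singleton.mp (hA2le habm)
      have hLHS : M.mul (M.mul a b) c = sc • M.mul e3 c := by
        rw [← hsc, map_smul, LinearMap.smul_apply]
      have hRHS : M.mul a (M.mul b c) + M.mul a (M.mul c b) = t • M.mul a e3 := by
        rw [← map_add, ← ht, map_smul]
      have heq : t • M.mul a e3 = sc • M.mul e3 c := by rw [← hRHS, ← hzb, hLHS]
      have hfin : M.mul a e3 = (t⁻¹ * sc) • M.mul e3 c := by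
        have h := congrArg (fun w => t⁻¹ • w) heq
        simpa [smul_smul, inv_mul_cancel₀ htne] using h
      rw [hfin]
      exact Submodule.smul_mem _ _ (Submodule.mem_span_singleton_self _)
    have h3le : Ag 3 ≤ Submodule.span ℂ {M.mul e3 c} := by
      have hle := proj_lemma Ag M hg 2 (by norm_num) (by norm_num)
      norm_num at hle
      refine le_trans hle (Submodule.span_le.mpr ?_)
      rintro w ⟨x, hx, y, hy, rfl⟩
      obtain ⟨μ, hμ⟩ := Submodule.mem_span_singleton.mp (hA2le hy)
      rw [← hμ, map_smul]
      exact Submodule.smul_mem _ _ (key x hx)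
    have habs : (2 : ℕ) ≤ 1 := by
      calc (2 : ℕ) = Module.finrank ℂ (Ag 3) := h2.symm
        _ ≤ Module.finrank ℂ (Submodule.span ℂ {M.mul e3 c}) := Submodule.finrank_mono h3le
        _ ≤ 1 := finrank_span_singleton_le' _
    omega
  have hsq : ∀ x ∈ Ag 1, M.mul x x = 0 := by
    intro x hx
    have h := hanti x hx x hx
    have h' : (2 : ℂ) • M.mul x x = 0 := by rw [two_smul]; exact h
    simpa using (smul_eq_zero.mp h').resolve_left (by norm_num)
  have he3r : ∀ x ∈ Ag 1, M.mul e3 x = 0 := by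
    intro x hx
    rw [he3, M.zinbiel u v x, ← map_add, hanti v hv x hx, map_zero]
  have huu : M.mul u u = 0 := hsq u hu
  have hvv : M.mul v v = 0 := hsq v hv
  have hvu : M.mul v u = -e3 := by
    have h := eq_neg_of_add_eq_zero_right (hanti u hu v hv)
    rw [← he3] at h
    exact h
  -- independence of u, v
  have hune : u ≠ 0 := by
    intro h0
    rw [h0] at huv
    simp at huv
  have hi12 : ∀ s t : ℂ, s • u + t • v = 0 → s = 0 ∧ t = 0 := by
    intro s t hst
    have h : M.mul u (s • u + t • v) = 0 := by rw [hst, map_zero]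
    rw [map_add, map_smul, map_smul, huu, smul_zero, zero_add] at h
    have ht0 : t = 0 := by
      rcases smul_eq_zero.mp h with h' | h'
      · exact h'
      · exact absurd h' huv
    subst ht0
    rw [zero_smul, add_zero] at hst
    exact ⟨(smul_eq_zero.mp hst).resolve_right hune, rfl⟩
  have hliuv : LinearIndependent ℂ ![u, v] := LinearIndependent.pair_iff.mpr hi12
  have hA1le : Ag 1 ≤ Submodule.span ℂ {u, v} := by
    have hsp : Submodule.span ℂ {u, v} ≤ Ag 1 := by
      rw [Submodule.span_le]
      rintro w (rfl | rfl)
      · exact hu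
      · exact hv
    have heq : Submodule.span ℂ {u, v} = Ag 1 := by
      apply Submodule.eq_of_le_of_finrank_le hsp
      rw [h1]
      have hcard := finrank_span_eq_card hliuv
      rw [Matrix.range_cons_cons_empty] at hcard
      rw [hcard]
      simp
    rw [← heq]
  have hmem1 : ∀ x ∈ Ag 1, ∃ a b : ℂ, x = a • u + b • v := by
    intro x hx
    obtain ⟨a, b, hab⟩ := Submodule.mem_span_pair.mp (hA1le hx)
    exact ⟨a, b, hab.symm⟩
  -- degree three
  obtain ⟨e4, he4⟩ : ∃ w, w = M.mul u e3 := ⟨_, rfl⟩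
  obtain ⟨e5, he5⟩ : ∃ w, w = M.mul v e3 := ⟨_, rfl⟩
  have he4m : e4 ∈ Ag 3 := by
    rw [he4]
    have h := hg.mul_mem 1 2 u e3 hu he3m
    norm_num at h
    exact h
  have he5m : e5 ∈ Ag 3 := by
    rw [he5]
    have h := hg.mul_mem 1 2 v e3 hv he3m
    norm_num at h
    exact h
  have hA3le : Ag 3 ≤ Submodule.span ℂ {e4, e5} := by
    have hle := proj_lemma Ag M hg 2 (by norm_num) (by norm_num)
    norm_num at hle
    refine le_trans hle (Submodule.span_le.mpr ?_)
    rintro w ⟨x, hx, y, hy, rfl⟩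
    obtain ⟨a, b, hx'⟩ := hmem1 x hx
    obtain ⟨μ, hμ⟩ := Submodule.mem_span_singleton.mp (hA2le hy)
    show M.mul x y ∈ Submodule.span ℂ {e4, e5}
    have hxy : M.mul x y = (a * μ) • e4 + (b * μ) • e5 := by
      rw [hx', ← hμ]
      simp only [map_add, map_smul, LinearMap.add_apply, LinearMap.smul_apply, ← he4, ← he5]
      module
    rw [hxy]
    exact add_mem (Submodule.smul_mem _ _ (Submodule.subset_span (by simp)))
      (Submodule.smul_mem _ _ (Submodule.subset_span (by simp)))
  have hmem3 : ∀ y ∈ Ag 3, ∃ c d : ℂ, y = c • e4 + d • e5 := by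
    intro y hy
    obtain ⟨c, d, hcd⟩ := Submodule.mem_span_pair.mp (hA3le hy)
    exact ⟨c, d, hcd.symm⟩
  have hi45 : ∀ s t : ℂ, s • e4 + t • e5 = 0 → s = 0 ∧ t = 0 := pair_indep h2 hA3le
  -- degree four table
  obtain ⟨e6, he6⟩ : ∃ w, w = M.mul u e5 := ⟨_, rfl⟩
  have hF1 : M.mul u e4 = 0 := by
    have h := M.zinbiel u u e3
    rw [huu, he3r u hu, ← he4] at h
    simp only [map_zero, LinearMap.zero_apply, add_zero] at h
    exact h.symm
  have hF3 : M.mul e3 e3 = e6 := by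
    have h := M.zinbiel u v e3
    rw [← he3, ← he5, he3r v hv, map_zero, add_zero, ← he6] at h
    exact h
  have hF2 : M.mul v e5 = 0 := by
    have h := M.zinbiel v v e3
    rw [hvv, he3r v hv, ← he5] at h
    simp only [map_zero, LinearMap.zero_apply, add_zero] at h
    exact h.symm
  have hF4 : M.mul v e4 = -e6 := by
    have h := M.zinbiel v u e3
    rw [hvu, ← he4, he3r u hu, map_zero, add_zero] at h
    rw [map_neg, LinearMap.neg_apply, hF3] at h
    exact h.symm
  have hF5 : M.mul e4 u = 0 := by
    have h := M.zinbiel u e3 u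
    rw [← he4, he3r u hu, map_zero, zero_add, hF1] at h
    exact h
  have hF6 : M.mul e4 v = e6 := by
    have h := M.zinbiel u e3 v
    rw [← he4, ← he5, he3r v hv, map_zero, zero_add, ← he6] at h
    exact h
  have hF7 : M.mul e5 u = -e6 := by
    have h := M.zinbiel v e3 u
    rw [← he5, ← he4, he3r u hu, map_zero, zero_add, hF4] at h
    exact h
  have hF8 : M.mul e5 v = 0 := by
    have h := M.zinbiel v e3 v
    rw [← he5, he3r v hv, map_zero, zero_add, hF2] at h
    exact h
  have he6m : e6 ∈ Ag 4 := by
    rw [he6]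
    have h := hg.mul_mem 1 3 u e5 hu he5m
    norm_num at h
    exact h
  have hA4le : Ag 4 ≤ Submodule.span ℂ {e6} := by
    have hle := proj_lemma Ag M hg 3 (by norm_num) (by norm_num)
    norm_num at hle
    refine le_trans hle (Submodule.span_le.mpr ?_)
    rintro w ⟨x, hx, y, hy, rfl⟩
    obtain ⟨a, b, hx'⟩ := hmem1 x hx
    obtain ⟨c, d, hy'⟩ := hmem3 y hy
    show M.mul x y ∈ Submodule.span ℂ {e6}
    have hxy : M.mul x y = (a * d - b * c) • e6 := by
      rw [hx', hy']
      simp only [map_add, map_smul, LinearMap.add_apply, LinearMap.smul_apply,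
        hF1, hF2, hF4, ← he6]
      module
    rw [hxy]
    exact Submodule.smul_mem _ _ (Submodule.mem_span_singleton_self _)
  have hA4ne : Ag 4 ≠ ⊥ := by
    intro h
    rw [h] at hr4
    simp only [finrank_bot] at hr4
    exact absurd hr4 (by norm_num)
  obtain ⟨z4, hz4, hz4ne⟩ := Submodule.exists_mem_ne_zero_of_ne_bot hA4ne
  have he6ne : e6 ≠ 0 := by
    intro h0
    have h := hA4le hz4
    rw [h0, Submodule.span_zero_singleton, Submodule.mem_bot] at h
    exact hz4ne h
  have hmem4 : ∀ y ∈ Ag 4, ∃ μ : ℂ, y = μ • e6 := by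
    intro y hy
    obtain ⟨μ, hμ⟩ := Submodule.mem_span_singleton.mp (hA4le hy)
    exact ⟨μ, hμ.symm⟩
  -- degree five
  obtain ⟨p, hp⟩ : ∃ w, w = M.mul u e6 := ⟨_, rfl⟩
  obtain ⟨q, hq⟩ : ∃ w, w = M.mul v e6 := ⟨_, rfl⟩
  have hG1 : M.mul e3 e4 = 0 := by
    have h := M.zinbiel u v e4
    rw [← he3, hF4, hF6] at h
    simp only [map_neg, neg_add_cancel] at h
    exact h
  have hG2 : M.mul e3 e5 = 0 := by
    have h := M.zinbiel u v e5
    rw [← he3, hF2, hF8, map_zero, add_zero] at h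
    exact h
  have hG3 : M.mul e6 u = 0 := by
    have h := M.zinbiel v e4 u
    rw [hF4, hF5, hF1, map_zero, add_zero] at h
    rw [map_neg, LinearMap.neg_apply] at h
    exact neg_eq_zero.mp h
  have hG4 : M.mul e6 v = 0 := by
    have h := M.zinbiel v e4 v
    rw [hF4, hF6] at h
    rw [map_neg, LinearMap.neg_apply, map_neg] at h
    simp only [add_neg_cancel] at h
    exact neg_eq_zero.mp h
  have hG5 : M.mul e4 e3 = (2 : ℂ) • p := by
    have h := M.zinbiel u e3 e3
    rw [← he4, hF3, ← hp] at h
    rw [two_smul]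
    exact h
  have hG6 : M.mul e5 e3 = (2 : ℂ) • q := by
    have h := M.zinbiel v e3 e3
    rw [← he5, hF3, ← hq] at h
    rw [two_smul]
    exact h
  have hpm : p ∈ Ag 5 := by
    rw [hp]
    have h := hg.mul_mem 1 4 u e6 hu he6m
    norm_num at h
    exact h
  have hqm : q ∈ Ag 5 := by
    rw [hq]
    have h := hg.mul_mem 1 4 v e6 hv he6m
    norm_num at h
    exact h
  have hA5le : Ag 5 ≤ Submodule.span ℂ {p, q} := by
    have hle := proj_lemma Ag M hg 4 (by norm_num) le_rfl
    norm_num at hle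
    refine le_trans hle (Submodule.span_le.mpr ?_)
    rintro w ⟨x, hx, y, hy, rfl⟩
    obtain ⟨a, b, hx'⟩ := hmem1 x hx
    obtain ⟨μ, hy'⟩ := hmem4 y hy
    show M.mul x y ∈ Submodule.span ℂ {p, q}
    have hxy : M.mul x y = (a * μ) • p + (b * μ) • q := by
      rw [hx', hy']
      simp only [map_add, map_smul, LinearMap.add_apply, LinearMap.smul_apply, ← hp, ← hq]
      module
    rw [hxy]
    exact add_mem (Submodule.smul_mem _ _ (Submodule.subset_span (by simp)))
      (Submodule.smul_mem _ _ (Submodule.subset_span (by simp)))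
  obtain ⟨z5, hz5, hz5ne⟩ := Submodule.exists_mem_ne_zero_of_ne_bot hA5ne
  have hpq : ¬(p = 0 ∧ q = 0) := by
    rintro ⟨hp0, hq0⟩
    have h := hA5le hz5
    rw [hp0, hq0] at h
    have hset : ({(0 : A), 0} : Set A) = {0} := by simp
    rw [hset, Submodule.span_zero_singleton, Submodule.mem_bot] at h
    exact hz5ne h
  by_cases hp0 : p = 0
  · -- first normalisation: basis v, -u
    have hq0 : q ≠ 0 := fun h => hpq ⟨hp0, h⟩
    exact assemble M Ag hg.indep hsup hrank hg.high_deg hg.mul_mem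
      v (-u) e3 e5 (-e4) e6 q
      hv (neg_mem hu) he3m he5m (neg_mem he4m) he6m hqm
      (by
        intro s t hst
        have h := hi12 (-t) s (by linear_combination (norm := module) hst)
        exact ⟨h.2, neg_eq_zero.mp h.1⟩)
      (by
        intro s t hst
        have h := hi45 (-t) s (by linear_combination (norm := module) hst)
        exact ⟨h.2, neg_eq_zero.mp h.1⟩)
      he3ne he6ne hq0
      hvv
      (by rw [map_neg, hvu, neg_neg])
      (by simp only [map_neg, LinearMap.neg_apply, ← he3])
      (by simp only [map_neg, LinearMap.neg_apply, huu, neg_zero])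
      he5.symm
      (by simp only [map_neg, LinearMap.neg_apply, ← he4])
      (he3r v hv)
      (by rw [map_neg, he3r u hu, neg_zero])
      hF2
      (by rw [map_neg, hF4, neg_neg])
      (by simp only [map_neg, LinearMap.neg_apply, ← he6])
      (by simp only [map_neg, LinearMap.neg_apply, hF1, neg_zero])
      hF8
      (by rw [map_neg, hF7, neg_neg])
      (by simp only [map_neg, LinearMap.neg_apply, hF6])
      (by simp only [map_neg, LinearMap.neg_apply, hF5, neg_zero])
      hF3
      hq.symm
      (by simp only [map_neg, LinearMap.neg_apply, ← hp, hp0, neg_zero])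
      hG4
      (by rw [map_neg, hG3, neg_zero])
      hG2
      (by rw [map_neg, hG1, neg_zero])
      hG6
      (by simp only [map_neg, LinearMap.neg_apply, hG5, hp0, smul_zero, neg_zero])
  · -- second normalisation: basis u, v - β•u  where q = β•p
    have hA5p : Submodule.span ℂ {p} = Ag 5 := by
      apply Submodule.eq_of_le_of_finrank_le
      · rw [Submodule.span_le, Set.singleton_subset_iff]
        exact hpm
      · rw [hr5, finrank_span_singleton hp0]
    obtain ⟨β, hβ⟩ : ∃ β : ℂ, β • p = q := by
      have h : q ∈ Submodule.span ℂ {p} := by rw [hA5p]; exact hqm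
      exact Submodule.mem_span_singleton.mp h
    refine assemble M Ag hg.indep hsup hrank hg.high_deg hg.mul_mem
      u (v - β • u) e3 e4 (e5 - β • e4) e6 p
      hu (sub_mem hv (Submodule.smul_mem _ _ hu)) he3m he4m
      (sub_mem he5m (Submodule.smul_mem _ _ he4m)) he6m hpm
      ?_ ?_ he3ne he6ne hp0
      huu
      ?_ ?_ ?_
      he4.symm ?_ (he3r u hu) ?_
      hF1 ?_ ?_ ?_
      hF5 ?_ ?_ ?_
      hF3
      hp.symm ?_ hG3 ?_
      hG1 ?_ hG5 ?_
    · intro s t hst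
      have h := hi12 (s - t * β) t (by linear_combination (norm := module) hst)
      refine ⟨?_, h.2⟩
      have := h.1
      rw [h.2] at this
      simpa using this
    · intro s t hst
      have h := hi45 (s - t * β) t (by linear_combination (norm := module) hst)
      refine ⟨?_, h.2⟩
      have := h.1
      rw [h.2] at this
      simpa using this
    · -- t12 : mul u (v - β u) = e3
      rw [map_sub, map_smul, huu, smul_zero, sub_zero, ← he3]
    · -- t21 : mul (v - β u) u = -e3
      simp only [map_sub, map_smul, LinearMap.sub_apply, LinearMap.smul_apply, hvu, huu,
        smul_zero, sub_zero]
    · -- t22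
      simp only [map_sub, map_smul, LinearMap.sub_apply, LinearMap.smul_apply, hvv, huu,
        hvu, ← he3]
      module
    · -- t23 : mul (v - β u) e3 = e5 - β e4
      simp only [map_sub, map_smul, LinearMap.sub_apply, LinearMap.smul_apply, ← he4, ← he5]
    · -- t32 : mul e3 (v - β u) = 0
      rw [map_sub, map_smul, he3r v hv, he3r u hu, smul_zero, sub_zero]
    · -- t15 : mul u (e5 - β e4) = e6
      rw [map_sub, map_smul, hF1, smul_zero, sub_zero, ← he6]
    · -- t24 : mul (v - β u) e4 = -e6
      simp only [map_sub, map_smul, LinearMap.sub_apply, LinearMap.smul_apply, hF4, hF1,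
        smul_zero, sub_zero]
    · -- t25 : mul (v - β u) (e5 - β e4) = 0
      simp only [map_sub, map_smul, LinearMap.sub_apply, LinearMap.smul_apply, hF2, hF4,
        hF1, ← he6]
      module
    · -- t42 : mul e4 (v - β u) = e6
      rw [map_sub, map_smul, hF6, hF5, smul_zero, sub_zero]
    · -- t51 : mul (e5 - β e4) u = -e6
      simp only [map_sub, map_smul, LinearMap.sub_apply, LinearMap.smul_apply, hF7, hF5,
        smul_zero, sub_zero]
    · -- t52 : mul (e5 - β e4) (v - β u) = 0
      simp only [map_sub, map_smul, LinearMap.sub_apply, LinearMap.smul_apply, hF8, hF7,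
        hF6, hF5]
      module
    · -- t26 : mul (v - β u) e6 = 0
      simp only [map_sub, map_smul, LinearMap.sub_apply, LinearMap.smul_apply, ← hq, ← hp]
      rw [← hβ]
      module
    · -- t62 : mul e6 (v - β u) = 0
      rw [map_sub, map_smul, hG4, hG3, smul_zero, sub_zero]
    · -- t35 : mul e3 (e5 - β e4) = 0
      rw [map_sub, map_smul, hG2, hG1, smul_zero, sub_zero]
    · -- t53 : mul (e5 - β e4) e3 = 0
      simp only [map_sub, map_smul, LinearMap.sub_apply, LinearMap.smul_apply, hG6, hG5]
      rw [← hβ]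
      module

end ZinbielStr
end
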